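/- arXiv:2212.14860 — 3 statements merged into one kernel-verified Lean document; each statement's English description precedes it below -/
import Mathlib

section
/- For every n ≥ 2 there is a 2-colouring of the edges of the complete graph on 9n−4 vertices with colours red and blue containing no monochromatic copy of P_{3n}^2 (and hence no monochromatic copy of C_{3n}^2). Explicitly, one may take disjoint sets X_1,X_2,Y_1,Y_2 of size 2n−1, a set Z of size n−1 and one extra vertex z; colour all edges inside X_1 and inside X_2 blue, all edges inside Y_1 and inside Y_2 red, all edges in (X_1,X_2), (X_1,Z), (X_2,Z), (X_1,Y_2), (X_2,Y_1) red, all edges in (Y_1,Y_2), (Y_1,Z), (Y_2,Z), (X_1,Y_1), (X_2,Y_2) blue, all edges from z to X_1∪X_2 blue and from z to Y_1∪Y_2 red, and colour the edges inside Z∪{z} arbitrarily. -/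
/-!
Common definitions.  Colour convention for 2-edge-colourings `c : Sym2 V → Bool`:
`true` = red, `false` = blue.  For 3-colourings by `Fin 3`: `0` = red, `1` = blue,
`2` = purple.
-/

/-- The square of the path on `k` vertices: `i` and `j` are adjacent iff `1 ≤ |i - j| ≤ 2`. -/
def pathSq (k : ℕ) : SimpleGraph (Fin k) where
  Adj i j := i ≠ j ∧ i.val ≤ j.val + 2 ∧ j.val ≤ i.val + 2
  symm := by
    constructor
    rintro i j ⟨h1, h2, h3⟩
    exact ⟨h1.symm, h3, h2⟩
  loopless := by
    constructor
    rintro i ⟨h, -⟩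
    exact h rfl

/-- The square of the cycle on `k` vertices: vertices at (cyclic) distance `1` or `2`
are adjacent. -/
def cycleSq (k : ℕ) : SimpleGraph (ZMod k) where
  Adj i j := i ≠ j ∧ (j = i + 1 ∨ j = i + 2 ∨ i = j + 1 ∨ i = j + 2)
  symm := by
    constructor
    rintro i j ⟨h1, h2⟩
    exact ⟨h1.symm, by tauto⟩
  loopless := by
    constructor
    rintro i ⟨h, -⟩
    exact h rfl

/-- A 2-edge-coloured complete graph (with colouring `c`) contains a monochromatic copy
of the graph `H`. -/
def HasMonoCopy {W V : Type*} (H : SimpleGraph W) (c : Sym2 V → Bool) : Prop :=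
  ∃ (b : Bool) (f : W ↪ V), ∀ u v : W, H.Adj u v → c s(f u, f v) = b

/-- The subgraph of a 2-edge-coloured graph consisting of the edges of colour `b`. -/
def colourSubgraph {V : Type*} (G : SimpleGraph V) (c : Sym2 V → Bool) (b : Bool) :
    SimpleGraph V where
  Adj u v := G.Adj u v ∧ c s(u, v) = b
  symm := by
    constructor
    rintro u v ⟨h1, h2⟩
    exact ⟨h1.symm, by rwa [Sym2.eq_swap]⟩
  loopless := by
    constructor
    rintro u ⟨h, -⟩
    exact G.loopless.irrefl u h

/-- Two edges are directly triangle-connected: they share a vertex and the two remaining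
endpoints are adjacent. -/
def EdgeTriangleAdj {V : Type*} (G : SimpleGraph V) (e f : Sym2 V) : Prop :=
  ∃ u v w, G.Adj u v ∧ G.Adj u w ∧ G.Adj v w ∧ e = s(u, v) ∧ f = s(u, w)

/-- Triangle-connectedness of edges: the reflexive-transitive closure of direct
triangle-connectedness.  Two edges lie in the same triangle component iff they are
triangle-connected. -/
def TriangleConnected {V : Type*} (G : SimpleGraph V) (e f : Sym2 V) : Prop :=
  Relation.ReflTransGen (EdgeTriangleAdj G) e f

/-- `t` is (the vertex set of) a triangle of `G`. -/
def IsTriangle {V : Type*} [DecidableEq V] (G : SimpleGraph V) (t : Finset V) : Prop :=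
  ∃ u v w, G.Adj u v ∧ G.Adj u w ∧ G.Adj v w ∧ t = {u, v, w}

/-- `e` is an edge inside the vertex set `t`. -/
def EdgeOf {V : Type*} (t : Finset V) (e : Sym2 V) : Prop := ∀ x ∈ e, x ∈ t

/-- `T` is a triangle-connected triangle factor (TCTF) of `G`: a collection of pairwise
vertex-disjoint triangles of `G` all of whose edges lie in a single triangle component. -/
def IsTCTF {V : Type*} [DecidableEq V] (G : SimpleGraph V) (T : Finset (Finset V)) : Prop :=
  (∀ t ∈ T, IsTriangle G t) ∧
  ((T : Set (Finset V)).Pairwise Disjoint) ∧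
  (∀ t ∈ T, ∀ t' ∈ T, ∀ e ∈ G.edgeSet, ∀ f ∈ G.edgeSet,
    EdgeOf t e → EdgeOf t' f → TriangleConnected G e f)

/-- The 2-edge-coloured graph `(G, c)` has a monochromatic TCTF on at least `s` vertices. -/
def HasMonoTCTF {V : Type*} [DecidableEq V] (G : SimpleGraph V) (c : Sym2 V → Bool)
    (s : ℝ) : Prop :=
  ∃ (b : Bool) (T : Finset (Finset V)),
    IsTCTF (colourSubgraph G c b) T ∧ s ≤ ((T.biUnion id).card : ℝ)

/-- The degree of `v` in `G`. -/
noncomputable def gdeg {V : Type*} (G : SimpleGraph V) (v : V) : ℕ :=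
  {u | G.Adj v u}.ncard

/-- `v` is `r`-`b` to `A`: `va` is an edge of colour `b` for all but at most `r` of the
vertices `a ∈ A`. -/
def VertexRColour {V K : Type*} (G : SimpleGraph V) (c : Sym2 V → K) (b : K) (r : ℝ)
    (v : V) (A : Finset V) : Prop :=
  ({a ∈ (A : Set V) | ¬(G.Adj v a ∧ c s(v, a) = b)}.ncard : ℝ) ≤ r

/-- The pair `(A, B)` is `r`-`b`: all but at most `r` vertices of `A` are `r`-`b` to `B`
and vice versa. -/
def PairRColour {V K : Type*} (G : SimpleGraph V) (c : Sym2 V → K) (b : K) (r : ℝ)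
    (A B : Finset V) : Prop :=
  ({a ∈ (A : Set V) | ¬VertexRColour G c b r a B}.ncard : ℝ) ≤ r ∧
  ({a ∈ (B : Set V) | ¬VertexRColour G c b r a A}.ncard : ℝ) ≤ r

/-- `M` is a matching of `G` (a set of pairwise vertex-disjoint edges of `G`). -/
def IsMatching' {V : Type*} (G : SimpleGraph V) (M : Finset (Sym2 V)) : Prop :=
  (∀ e ∈ M, e ∈ G.edgeSet) ∧
  ((M : Set (Sym2 V)).Pairwise fun e f => ∀ x, x ∈ e → x ∉ f)

/-- `M` is a connected matching of `G`: a matching all of whose edges lie in the same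
connected component of `G`. -/
def IsConnMatching {V : Type*} (G : SimpleGraph V) (M : Finset (Sym2 V)) : Prop :=
  IsMatching' G M ∧ ∀ e ∈ M, ∀ f ∈ M, ∀ u v : V, u ∈ e → v ∈ f → G.Reachable u v

/-- The number of neighbours of `v` (in the graph `G`) inside `A`. -/
noncomputable def nbrCountIn {V : Type*} (G : SimpleGraph V) (v : V) (A : Finset V) : ℕ :=
  {a ∈ (A : Set V) | G.Adj v a}.ncard

/-- In a colouring of a complete graph, the number of `b`-coloured neighbours of `v`
inside `A`. -/
noncomputable def colourNbrCount {V : Type*} (c : Sym2 V → Bool) (b : Bool) (v : V)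
    (A : Finset V) : ℕ :=
  {a ∈ (A : Set V) | a ≠ v ∧ c s(v, a) = b}.ncard

/-- Every vertex of `A` has at most `r` `b`-coloured neighbours in `B` and vice versa
(for a colouring of a complete graph). -/
def PairFewColour {V : Type*} (c : Sym2 V → Bool) (b : Bool) (r : ℝ) (A B : Finset V) :
    Prop :=
  (∀ v ∈ A, (colourNbrCount c b v B : ℝ) ≤ r) ∧
  (∀ v ∈ B, (colourNbrCount c b v A : ℝ) ≤ r)

/-- The number of edges of `G` with one endpoint in `A` and the other in `B`. -/
noncomputable def edgesBetween {V : Type*} (G : SimpleGraph V) (A B : Finset V) : ℕ :=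
  {e ∈ G.edgeSet | ∃ a ∈ A, ∃ b ∈ B, e = s(a, b)}.ncard

/-- Two cliques of `G'` (each with at least two vertices) are triangle-connected in `G'`:
some edge of one is triangle-connected to some edge of the other. -/
def CliquesTC {V : Type*} (G' : SimpleGraph V) (C C' : Finset V) : Prop :=
  ∃ u v w x, u ∈ C ∧ v ∈ C ∧ w ∈ C' ∧ x ∈ C' ∧ G'.Adj u v ∧ G'.Adj w x ∧
    TriangleConnected G' s(u, v) s(w, x)

/-- The parameter `m = |log ε| / 4` of the Setting. -/
noncomputable def mval (ε : ℝ) : ℝ := |Real.log ε| / 4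

/-- A clique decomposition of the 2-edge-coloured graph `(G, c)` with parameters `ε`, `t`
(the Setting of the paper): a partition of `V(G)` into a small set `Vbin` together with a
collection `cliques` of monochromatic cliques (`col K` is the colour of the clique `K`),
each of size between `2` and `m = |log ε|/4`, with at most `9t/m` cliques, such that each
vertex of a clique of colour `b` sends at most `20t/√m` edges of colour `b` to vertices
in cliques of colour `b` not `b`-triangle-connected to its own clique, and, for every
`k ≥ 1`, at most `400kt/|log ε|^{3/2}` of the cliques have fewer than `(1 - 1/k)m`
vertices. -/
def IsCliqueDecomp {V : Type*} [Fintype V] [DecidableEq V] (G : SimpleGraph V)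
    (c : Sym2 V → Bool) (ε t : ℝ) (Vbin : Finset V) (cliques : Finset (Finset V))
    (col : Finset V → Bool) : Prop :=
  (∀ K ∈ cliques, Disjoint K Vbin) ∧
  ((cliques : Set (Finset V)).Pairwise Disjoint) ∧
  (Vbin ∪ cliques.biUnion id = Finset.univ) ∧
  ((Vbin.card : ℝ) ≤ Real.sqrt ε * t + 40 * t / Real.sqrt (mval ε)) ∧
  ((cliques.card : ℝ) ≤ 9 * t / mval ε) ∧
  (∀ K ∈ cliques, 2 ≤ K.card ∧ (K.card : ℝ) ≤ mval ε ∧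
    ∀ u ∈ K, ∀ v ∈ K, u ≠ v → G.Adj u v ∧ c s(u, v) = col K) ∧
  (∀ b : Bool, ∀ C ∈ cliques, col C = b → ∀ u ∈ C,
    ({v | ∃ C' ∈ cliques, col C' = b ∧ v ∈ C' ∧
        ¬CliquesTC (colourSubgraph G c b) C C' ∧
        (colourSubgraph G c b).Adj u v}.ncard : ℝ) ≤ 20 * t / Real.sqrt (mval ε)) ∧
  (∀ k : ℕ, 1 ≤ k →
    ({K ∈ (cliques : Set (Finset V)) | (K.card : ℝ) < (1 - 1 / (k : ℝ)) * mval ε}.ncard : ℝ)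
      ≤ 400 * k * t / Real.sqrt (|Real.log ε| ^ 3))

/-- Recolour the purple (`2`) edges of a 3-colouring by red (`true`) or blue (`false`),
producing a 2-colouring (`true` = red, `false` = blue). -/
def recolourPurple {V : Type*} (c : Sym2 V → Fin 3) (b : Bool) : Sym2 V → Bool :=
  fun e => if c e = 2 then b else decide (c e = 0)

lemma gapAux {V : Type*} (n : ℕ) (hn : 2 ≤ n) (S R : V → Prop) (g : ℕ → V)
    (H : ∀ t, t + 2 < 3 * n → (S (g t) ∨ S (g (t+1)) ∨ S (g (t+2))) →
      ((S (g t) ∧ S (g (t+1))) ∨ (S (g t) ∧ S (g (t+2))) ∨ (S (g (t+1)) ∧ S (g (t+2)))) ∧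
      (∀ p, t ≤ p → p ≤ t + 2 → ¬ R (g p))) :
    ∀ j k, j < 3*n → k < 3*n → S (g j) → R (g k) → False := by
  suffices h : ∀ d j k, j < 3*n → k < 3*n → S (g j) → R (g k) → (j - k) + (k - j) = d → False by
    intro j k hj hk hS hR; exact h _ j k hj hk hS hR rfl
  intro d
  induction d using Nat.strong_induction_on with
  | _ d ih =>
  intro j k hj hk hS hR hd
  by_cases hle : (j - k) + (k - j) ≤ 2
  · set t := min (min j k) (3*n - 3) with ht
    have h2 : t + 2 < 3*n := by omega
    have hjw : j = t ∨ j = t+1 ∨ j = t+2 := by omega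
    have hmem : S (g t) ∨ S (g (t+1)) ∨ S (g (t+2)) := by
      rcases hjw with h|h|h
      · exact Or.inl (h ▸ hS)
      · exact Or.inr (Or.inl (h ▸ hS))
      · exact Or.inr (Or.inr (h ▸ hS))
    exact (H t h2 hmem).2 k (by omega) (by omega) hR
  · rcases Nat.lt_or_ge j k with hlt | hge
    · have h2 : j + 2 < 3*n := by omega
      obtain ⟨hp, -⟩ := H j h2 (Or.inl hS)
      rcases hp with ⟨-, h1⟩ | ⟨-, h1⟩ | ⟨h1, -⟩
      · exact ih ((j+1-k)+(k-(j+1))) (by omega) (j+1) k (by omega) hk h1 hR rfl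
      · exact ih ((j+2-k)+(k-(j+2))) (by omega) (j+2) k (by omega) hk h1 hR rfl
      · exact ih ((j+1-k)+(k-(j+1))) (by omega) (j+1) k (by omega) hk h1 hR rfl
    · have h2 : (j-2) + 2 < 3*n := by omega
      have e1 : j - 2 + 1 = j - 1 := by omega
      have e2 : j - 2 + 2 = j := by omega
      obtain ⟨hp, -⟩ := H (j-2) h2 (Or.inr (Or.inr (by rw [e2]; exact hS)))
      rcases hp with ⟨h1, -⟩ | ⟨h1, -⟩ | ⟨h1, -⟩
      · exact ih ((j-2-k)+(k-(j-2))) (by omega) (j-2) k (by omega) hk h1 hR rfl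
      · exact ih ((j-2-k)+(k-(j-2))) (by omega) (j-2) k (by omega) hk h1 hR rfl
      · exact ih ((j-1-k)+(k-(j-1))) (by omega) (j-1) k (by omega) hk (by rwa [e1] at h1) hR rfl

lemma noPathAux {V : Type*} [DecidableEq V] (n : ℕ) (hn : 2 ≤ n)
    (P1 P2 Q : Finset V)
    (hP1 : P1.card ≤ 2 * n - 1) (hP2 : P2.card ≤ 2 * n - 1) (hQ : Q.card ≤ n - 1)
    (g : ℕ → V)
    (hg : ∀ i j, i < 3*n → j < 3*n → g i = g j → i = j)
    (H1 : ∀ t, t + 2 < 3*n → (g t ∈ P1 ∨ g (t+1) ∈ P1 ∨ g (t+2) ∈ P1) →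
      ((g t ∈ P1 ∧ g (t+1) ∈ P1) ∨ (g t ∈ P1 ∧ g (t+2) ∈ P1) ∨ (g (t+1) ∈ P1 ∧ g (t+2) ∈ P1)) ∧
      (∀ p, t ≤ p → p ≤ t + 2 → g p ∉ P2 ∧ g p ∉ Q))
    (H2 : ∀ t, t + 2 < 3*n → (g t ∈ P2 ∨ g (t+1) ∈ P2 ∨ g (t+2) ∈ P2) →
      ((g t ∈ P2 ∧ g (t+1) ∈ P2) ∨ (g t ∈ P2 ∧ g (t+2) ∈ P2) ∨ (g (t+1) ∈ P2 ∧ g (t+2) ∈ P2)) ∧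
      (∀ p, t ≤ p → p ≤ t + 2 → g p ∉ P1 ∧ g p ∉ Q))
    (H3 : ∀ t, t + 2 < 3*n → (∀ p, t ≤ p → p ≤ t + 2 → g p ∉ P1 ∧ g p ∉ P2) →
      (g t ∈ Q ∨ g (t+1) ∈ Q ∨ g (t+2) ∈ Q)) : False := by
  have countP : ∀ (P : Finset V) (m : ℕ),
      (∀ j, j < n → m ≤ ((Finset.range (3*n)).filter
          (fun p => g p ∈ P ∧ p / 3 = j)).card) → n * m ≤ P.card := by
    intro P m hfib
    have hT : ((Finset.range (3*n)).filter (fun p => g p ∈ P)).card ≤ P.card := by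
      apply Finset.card_le_card_of_injOn g
      · intro p hp; simp only [Finset.mem_coe, Finset.mem_filter] at hp; exact hp.2
      · intro p hp q hq h
        simp only [Finset.coe_filter, Set.mem_setOf_eq, Finset.mem_range] at hp hq
        exact hg p q hp.1 hq.1 h
    have hsum : ((Finset.range (3*n)).filter (fun p => g p ∈ P)).card
        = ∑ j ∈ Finset.range n, (((Finset.range (3*n)).filter (fun p => g p ∈ P)).filter
            (fun p => p / 3 = j)).card := by
      apply Finset.card_eq_sum_card_fiberwise
      intro p hp
      simp only [Finset.mem_coe, Finset.mem_filter, Finset.mem_range] at hp ⊢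
      omega
    have hle : (Finset.range n).card • m ≤ ∑ j ∈ Finset.range n, (((Finset.range (3*n)).filter
        (fun p => g p ∈ P)).filter (fun p => p / 3 = j)).card := by
      apply Finset.card_nsmul_le_sum
      intro j hj
      rw [Finset.filter_filter]
      exact hfib j (Finset.mem_range.mp hj)
    simp only [Finset.card_range, smul_eq_mul] at hle
    omega
  by_cases hE1 : ∃ j, j < 3*n ∧ g j ∈ P1
  · obtain ⟨j0, hj0, hgj0⟩ := hE1
    have hgap := gapAux n hn (· ∈ P1) (fun v => v ∈ P2 ∨ v ∈ Q) g (by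
      intro t ht hs
      obtain ⟨h1, h2⟩ := H1 t ht hs
      refine ⟨h1, fun p hp1 hp2 hr => ?_⟩
      rcases hr with h|h
      · exact (h2 p hp1 hp2).1 h
      · exact (h2 p hp1 hp2).2 h)
    have hnoR : ∀ k, k < 3*n → g k ∉ P2 ∧ g k ∉ Q := by
      intro k hk
      exact ⟨fun h => hgap j0 k hj0 hk hgj0 (Or.inl h),
             fun h => hgap j0 k hj0 hk hgj0 (Or.inr h)⟩
    have h2n : n * 2 ≤ P1.card := by
      apply countP P1 2
      intro j hj
      have ht : 3*j + 2 < 3*n := by omega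
      have hmeets : g (3*j) ∈ P1 ∨ g (3*j+1) ∈ P1 ∨ g (3*j+2) ∈ P1 := by
        by_contra hno
        push_neg at hno
        have h3 := H3 (3*j) ht (fun p hp1 hp2 => by
          have hpe : p = 3*j ∨ p = 3*j+1 ∨ p = 3*j+2 := by omega
          refine ⟨?_, (hnoR p (by omega)).1⟩
          rcases hpe with h|h|h <;> subst h <;> tauto)
        rcases h3 with h|h|h
        · exact (hnoR (3*j) (by omega)).2 h
        · exact (hnoR (3*j+1) (by omega)).2 h
        · exact (hnoR (3*j+2) (by omega)).2 h
      have two_le : ∀ p q : ℕ, p ≠ q → 3*j ≤ p → p ≤ 3*j+2 → 3*j ≤ q → q ≤ 3*j+2 →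
          g p ∈ P1 → g q ∈ P1 →
          2 ≤ ((Finset.range (3*n)).filter (fun r => g r ∈ P1 ∧ r / 3 = j)).card := by
        intro p q hpq hp1 hp2 hq1 hq2 hgp hgq
        apply Finset.one_lt_card.mpr
        exact ⟨p, Finset.mem_filter.mpr ⟨Finset.mem_range.mpr (by omega), hgp, by omega⟩,
               q, Finset.mem_filter.mpr ⟨Finset.mem_range.mpr (by omega), hgq, by omega⟩, hpq⟩
      obtain ⟨hpair, -⟩ := H1 (3*j) ht hmeets
      rcases hpair with ⟨ha, hb⟩ | ⟨ha, hb⟩ | ⟨ha, hb⟩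
      · exact two_le (3*j) (3*j+1) (by omega) (by omega) (by omega) (by omega) (by omega) ha hb
      · exact two_le (3*j) (3*j+2) (by omega) (by omega) (by omega) (by omega) (by omega) ha hb
      · exact two_le (3*j+1) (3*j+2) (by omega) (by omega) (by omega) (by omega) (by omega) ha hb
    omega
  · by_cases hE2 : ∃ j, j < 3*n ∧ g j ∈ P2
    · obtain ⟨j0, hj0, hgj0⟩ := hE2
      push_neg at hE1
      have hgap := gapAux n hn (· ∈ P2) (fun v => v ∈ Q) g (by
        intro t ht hs
        obtain ⟨h1, h2⟩ := H2 t ht hs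
        exact ⟨h1, fun p hp1 hp2 hr => (h2 p hp1 hp2).2 hr⟩)
      have hnoQ : ∀ k, k < 3*n → g k ∉ Q := fun k hk h => hgap j0 k hj0 hk hgj0 h
      have h2n : n * 2 ≤ P2.card := by
        apply countP P2 2
        intro j hj
        have ht : 3*j + 2 < 3*n := by omega
        have hmeets : g (3*j) ∈ P2 ∨ g (3*j+1) ∈ P2 ∨ g (3*j+2) ∈ P2 := by
          by_contra hno
          push_neg at hno
          have h3 := H3 (3*j) ht (fun p hp1 hp2 => by
            have hpe : p = 3*j ∨ p = 3*j+1 ∨ p = 3*j+2 := by omega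
            refine ⟨hE1 p (by omega), ?_⟩
            rcases hpe with h|h|h <;> subst h <;> tauto)
          rcases h3 with h|h|h
          · exact hnoQ (3*j) (by omega) h
          · exact hnoQ (3*j+1) (by omega) h
          · exact hnoQ (3*j+2) (by omega) h
        have two_le : ∀ p q : ℕ, p ≠ q → 3*j ≤ p → p ≤ 3*j+2 → 3*j ≤ q → q ≤ 3*j+2 →
            g p ∈ P2 → g q ∈ P2 →
            2 ≤ ((Finset.range (3*n)).filter (fun r => g r ∈ P2 ∧ r / 3 = j)).card := by
          intro p q hpq hp1 hp2 hq1 hq2 hgp hgq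
          apply Finset.one_lt_card.mpr
          exact ⟨p, Finset.mem_filter.mpr ⟨Finset.mem_range.mpr (by omega), hgp, by omega⟩,
                 q, Finset.mem_filter.mpr ⟨Finset.mem_range.mpr (by omega), hgq, by omega⟩, hpq⟩
        obtain ⟨hpair, -⟩ := H2 (3*j) ht hmeets
        rcases hpair with ⟨ha, hb⟩ | ⟨ha, hb⟩ | ⟨ha, hb⟩
        · exact two_le (3*j) (3*j+1) (by omega) (by omega) (by omega) (by omega) (by omega) ha hb
        · exact two_le (3*j) (3*j+2) (by omega) (by omega) (by omega) (by omega) (by omega) ha hb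
        · exact two_le (3*j+1) (3*j+2) (by omega) (by omega) (by omega) (by omega) (by omega) ha hb
      omega
    · push_neg at hE1
      push_neg at hE2
      have h1n : n * 1 ≤ Q.card := by
        apply countP Q 1
        intro j hj
        have ht : 3*j + 2 < 3*n := by omega
        have h3 := H3 (3*j) ht (fun p hp1 hp2 => ⟨hE1 p (by omega), hE2 p (by omega)⟩)
        have one_le : ∀ p : ℕ, 3*j ≤ p → p ≤ 3*j+2 → g p ∈ Q →
            1 ≤ ((Finset.range (3*n)).filter (fun r => g r ∈ Q ∧ r / 3 = j)).card := by
          intro p hp1 hp2 hgp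
          apply Finset.card_pos.mpr
          exact ⟨p, Finset.mem_filter.mpr ⟨Finset.mem_range.mpr (by omega), hgp, by omega⟩⟩
        rcases h3 with h|h|h
        · exact one_le (3*j) (by omega) (by omega) h
        · exact one_le (3*j+1) (by omega) (by omega) h
        · exact one_le (3*j+2) (by omega) (by omega) h
      omega

lemma colourCaseAux {V : Type*} [DecidableEq V] (n : ℕ) (hn : 2 ≤ n)
    (A1 A2 B1 B2 Q : Finset V) (z : V) (c : Sym2 V → Bool) (τ : Bool)
    (hmem : ∀ v : V, v ∈ A1 ∨ v ∈ A2 ∨ v ∈ B1 ∨ v ∈ B2 ∨ v ∈ Q ∨ v = z)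
    (hA1card : A1.card ≤ 2*n-1) (hA2card : A2.card ≤ 2*n-1) (hQcard : Q.card ≤ n-1)
    (hdA1A2 : Disjoint A1 A2) (hdA1Q : Disjoint A1 Q) (hdA2Q : Disjoint A2 Q)
    (hdB1B2 : Disjoint B1 B2)
    (hA1A2 : ∀ u ∈ A1, ∀ v ∈ A2, c s(u,v) ≠ τ)
    (hA1Q : ∀ u ∈ A1, ∀ v ∈ Q, c s(u,v) ≠ τ)
    (hA2Q : ∀ u ∈ A2, ∀ v ∈ Q, c s(u,v) ≠ τ)
    (hA1B2 : ∀ u ∈ A1, ∀ v ∈ B2, c s(u,v) ≠ τ)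
    (hA2B1 : ∀ u ∈ A2, ∀ v ∈ B1, c s(u,v) ≠ τ)
    (hB1 : ∀ u ∈ B1, ∀ v ∈ B1, u ≠ v → c s(u,v) ≠ τ)
    (hB2 : ∀ u ∈ B2, ∀ v ∈ B2, u ≠ v → c s(u,v) ≠ τ)
    (hzB1 : ∀ v ∈ B1, c s(z,v) ≠ τ)
    (hzB2 : ∀ v ∈ B2, c s(z,v) ≠ τ)
    (g : ℕ → V)
    (hg : ∀ i j, i < 3*n → j < 3*n → g i = g j → i = j)
    (hadj : ∀ i j, i < 3*n → j < 3*n → i ≠ j → i ≤ j+2 → j ≤ i+2 → c s(g i, g j) = τ) :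
    False := by
  have csym : ∀ u v : V, c s(u,v) = c s(v,u) := fun u v => by rw [Sym2.eq_swap]
  -- symmetrised colour facts
  have nA1A2 : ∀ u v, u ∈ A1 → v ∈ A2 → c s(u,v) ≠ τ := fun u v hu hv => hA1A2 u hu v hv
  have nA1Q : ∀ u v, u ∈ A1 → v ∈ Q → c s(u,v) ≠ τ := fun u v hu hv => hA1Q u hu v hv
  have nA2Q : ∀ u v, u ∈ A2 → v ∈ Q → c s(u,v) ≠ τ := fun u v hu hv => hA2Q u hu v hv
  have nA1B2 : ∀ u v, u ∈ A1 → v ∈ B2 → c s(u,v) ≠ τ := fun u v hu hv => hA1B2 u hu v hv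
  have nA2B1 : ∀ u v, u ∈ A2 → v ∈ B1 → c s(u,v) ≠ τ := fun u v hu hv => hA2B1 u hu v hv
  -- within B1 ∪ {z} no τ edge
  have noPairB1 : ∀ v w, v ≠ w → (v ∈ B1 ∨ v = z) → (w ∈ B1 ∨ w = z) → c s(v,w) ≠ τ := by
    intro v w hvw hv hw
    rcases hv with hv | hv
    · rcases hw with hw | hw
      · exact hB1 v hv w hw hvw
      · subst hw; rw [csym]; exact hzB1 v hv
    · subst hv
      rcases hw with hw | hw
      · exact hzB1 w hw
      · exact absurd hw.symm hvw
  have noPairB2 : ∀ v w, v ≠ w → (v ∈ B2 ∨ v = z) → (w ∈ B2 ∨ w = z) → c s(v,w) ≠ τ := by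
    intro v w hvw hv hw
    rcases hv with hv | hv
    · rcases hw with hw | hw
      · exact hB2 v hv w hw hvw
      · subst hw; rw [csym]; exact hzB2 v hv
    · subst hv
      rcases hw with hw | hw
      · exact hzB2 w hw
      · exact absurd hw.symm hvw
  -- τ-neighbours of A1 outside A1 are in B1 ∪ {z}
  have otherA1 : ∀ u v, u ∈ A1 → c s(u,v) = τ → v ∉ A1 → v ∈ B1 ∨ v = z := by
    intro u v hu hc hv
    rcases hmem v with h|h|h|h|h|h
    · exact absurd h hv
    · exact absurd hc (nA1A2 u v hu h)
    · exact Or.inl h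
    · exact absurd hc (nA1B2 u v hu h)
    · exact absurd hc (nA1Q u v hu h)
    · exact Or.inr h
  have otherA2 : ∀ u v, u ∈ A2 → c s(u,v) = τ → v ∉ A2 → v ∈ B2 ∨ v = z := by
    intro u v hu hc hv
    rcases hmem v with h|h|h|h|h|h
    · exact absurd hc (by rw [csym]; exact nA1A2 v u h hu)
    · exact absurd h hv
    · exact absurd hc (nA2B1 u v hu h)
    · exact Or.inl h
    · exact absurd hc (nA2Q u v hu h)
    · exact Or.inr h
  -- two of any τ-triangle meeting A1 lie in A1
  have twoA1 : ∀ a bb cc, a ∈ A1 → a ≠ bb → a ≠ cc → bb ≠ cc →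
      c s(a,bb) = τ → c s(a,cc) = τ → c s(bb,cc) = τ → bb ∈ A1 ∨ cc ∈ A1 := by
    intro a bb cc ha hab hac hbc cab cac cbc
    by_cases hb : bb ∈ A1
    · exact Or.inl hb
    by_cases hc : cc ∈ A1
    · exact Or.inr hc
    exact absurd cbc (noPairB1 bb cc hbc (otherA1 a bb ha cab hb) (otherA1 a cc ha cac hc))
  have twoA2 : ∀ a bb cc, a ∈ A2 → a ≠ bb → a ≠ cc → bb ≠ cc →
      c s(a,bb) = τ → c s(a,cc) = τ → c s(bb,cc) = τ → bb ∈ A2 ∨ cc ∈ A2 := by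
    intro a bb cc ha hab hac hbc cab cac cbc
    by_cases hb : bb ∈ A2
    · exact Or.inl hb
    by_cases hc : cc ∈ A2
    · exact Or.inr hc
    exact absurd cbc (noPairB2 bb cc hbc (otherA2 a bb ha cab hb) (otherA2 a cc ha cac hc))
  have nearA1 : ∀ a v, a ∈ A1 → (a = v ∨ c s(a,v) = τ) → v ∉ A2 ∧ v ∉ Q := by
    intro a v ha h
    rcases h with h | h
    · subst h
      exact ⟨Finset.disjoint_left.mp hdA1A2 ha, Finset.disjoint_left.mp hdA1Q ha⟩
    · exact ⟨fun hv => nA1A2 a v ha hv h, fun hv => nA1Q a v ha hv h⟩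
  have nearA2 : ∀ a v, a ∈ A2 → (a = v ∨ c s(a,v) = τ) → v ∉ A1 ∧ v ∉ Q := by
    intro a v ha h
    rcases h with h | h
    · subst h
      exact ⟨Finset.disjoint_right.mp hdA1A2 ha, Finset.disjoint_left.mp hdA2Q ha⟩
    · exact ⟨fun hv => (by rw [csym] at h; exact nA1A2 v a hv ha h),
             fun hv => nA2Q a v ha hv h⟩
  -- τ-pairs among B1 ∪ B2 ∪ {z}
  have pairB : ∀ u v, u ≠ v → (u ∈ B1 ∨ u ∈ B2 ∨ u = z) → (v ∈ B1 ∨ v ∈ B2 ∨ v = z) →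
      c s(u,v) = τ → (u ∈ B1 ∧ v ∈ B2) ∨ (u ∈ B2 ∧ v ∈ B1) := by
    intro u v huv hu hv hc
    rcases hu with hu | hu | hu
    · rcases hv with hv | hv | hv
      · exact absurd hc (hB1 u hu v hv huv)
      · exact Or.inl ⟨hu, hv⟩
      · subst hv; exact absurd hc (by rw [csym]; exact hzB1 u hu)
    · rcases hv with hv | hv | hv
      · exact Or.inr ⟨hu, hv⟩
      · exact absurd hc (hB2 u hu v hv huv)
      · subst hv; exact absurd hc (by rw [csym]; exact hzB2 u hu)
    · subst hu
      rcases hv with hv | hv | hv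
      · exact absurd hc (hzB1 v hv)
      · exact absurd hc (hzB2 v hv)
      · exact absurd hv.symm huv
  -- a τ-triangle avoiding A1 ∪ A2 meets Q
  have triB : ∀ a bb cc, a ≠ bb → a ≠ cc → bb ≠ cc →
      c s(a,bb) = τ → c s(a,cc) = τ → c s(bb,cc) = τ →
      a ∉ A1 → a ∉ A2 → bb ∉ A1 → bb ∉ A2 → cc ∉ A1 → cc ∉ A2 →
      a ∈ Q ∨ bb ∈ Q ∨ cc ∈ Q := by
    intro a bb cc hab hac hbc cab cac cbc ha1 ha2 hb1 hb2 hc1 hc2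
    by_contra hno
    push_neg at hno
    obtain ⟨hqa, hqb, hqc⟩ := hno
    have cls : ∀ v : V, v ∉ A1 → v ∉ A2 → v ∉ Q → v ∈ B1 ∨ v ∈ B2 ∨ v = z := by
      intro v h1 h2 h3
      rcases hmem v with h|h|h|h|h|h <;> tauto
    have pab := pairB a bb hab (cls a ha1 ha2 hqa) (cls bb hb1 hb2 hqb) cab
    have pac := pairB a cc hac (cls a ha1 ha2 hqa) (cls cc hc1 hc2 hqc) cac
    have pbc := pairB bb cc hbc (cls bb hb1 hb2 hqb) (cls cc hc1 hc2 hqc) cbc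
    rcases pab with ⟨ha, hb⟩ | ⟨ha, hb⟩
    · have hc : cc ∈ B2 := by
        rcases pac with ⟨-, h⟩ | ⟨h, -⟩
        · exact h
        · exact absurd h (Finset.disjoint_left.mp hdB1B2 ha)
      rcases pbc with ⟨h, -⟩ | ⟨-, h⟩
      · exact absurd h (Finset.disjoint_right.mp hdB1B2 hb)
      · exact absurd hc (Finset.disjoint_left.mp hdB1B2 h)
    · have hc : cc ∈ B1 := by
        rcases pac with ⟨h, -⟩ | ⟨-, h⟩
        · exact absurd h (Finset.disjoint_right.mp hdB1B2 ha)
        · exact h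
      rcases pbc with ⟨-, h⟩ | ⟨h, -⟩
      · exact absurd h (Finset.disjoint_left.mp hdB1B2 hc)
      · exact absurd h (Finset.disjoint_left.mp hdB1B2 hb)
  -- distinctness of window vertices
  have hne : ∀ i j, i < 3*n → j < 3*n → i ≠ j → g i ≠ g j := by
    intro i j hi hj hij h
    exact hij (hg i j hi hj h)
  -- pairs within a window are equal or τ-coloured
  have winfact : ∀ p q, p < 3*n → q < 3*n → p ≤ q + 2 → q ≤ p + 2 →
      g p = g q ∨ c s(g p, g q) = τ := by
    intro p q hp hq h1 h2
    by_cases hpq : p = q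
    · exact Or.inl (by rw [hpq])
    · exact Or.inr (hadj p q hp hq hpq h1 h2)
  apply noPathAux n hn A1 A2 Q hA1card hA2card hQcard g hg
  · -- H1
    intro t ht hyp
    have d01 := hne t (t+1) (by omega) (by omega) (by omega)
    have d02 := hne t (t+2) (by omega) (by omega) (by omega)
    have d12 := hne (t+1) (t+2) (by omega) (by omega) (by omega)
    have e01 := hadj t (t+1) (by omega) (by omega) (by omega) (by omega) (by omega)
    have e02 := hadj t (t+2) (by omega) (by omega) (by omega) (by omega) (by omega)
    have e12 := hadj (t+1) (t+2) (by omega) (by omega) (by omega) (by omega) (by omega)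
    have e10 : c s(g (t+1), g t) = τ := by rw [csym]; exact e01
    have e20 : c s(g (t+2), g t) = τ := by rw [csym]; exact e02
    have e21 : c s(g (t+2), g (t+1)) = τ := by rw [csym]; exact e12
    constructor
    · rcases hyp with h | h | h
      · rcases twoA1 (g t) (g (t+1)) (g (t+2)) h d01 d02 d12 e01 e02 e12 with h' | h'
        · exact Or.inl ⟨h, h'⟩
        · exact Or.inr (Or.inl ⟨h, h'⟩)
      · rcases twoA1 (g (t+1)) (g t) (g (t+2)) h d01.symm d12 d02 e10 e12 e02 with h' | h'
        · exact Or.inl ⟨h', h⟩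
        · exact Or.inr (Or.inr ⟨h, h'⟩)
      · rcases twoA1 (g (t+2)) (g t) (g (t+1)) h d02.symm d12.symm d01 e20 e21 e01 with h' | h'
        · exact Or.inr (Or.inl ⟨h', h⟩)
        · exact Or.inr (Or.inr ⟨h', h⟩)
    · obtain ⟨p0, hp01, hp02, hp0⟩ : ∃ p0, t ≤ p0 ∧ p0 ≤ t + 2 ∧ g p0 ∈ A1 := by
        rcases hyp with h | h | h
        · exact ⟨t, by omega, by omega, h⟩
        · exact ⟨t+1, by omega, by omega, h⟩
        · exact ⟨t+2, by omega, by omega, h⟩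
      intro p hp1 hp2
      exact nearA1 (g p0) (g p) hp0 (winfact p0 p (by omega) (by omega) (by omega) (by omega))
  · -- H2
    intro t ht hyp
    have d01 := hne t (t+1) (by omega) (by omega) (by omega)
    have d02 := hne t (t+2) (by omega) (by omega) (by omega)
    have d12 := hne (t+1) (t+2) (by omega) (by omega) (by omega)
    have e01 := hadj t (t+1) (by omega) (by omega) (by omega) (by omega) (by omega)
    have e02 := hadj t (t+2) (by omega) (by omega) (by omega) (by omega) (by omega)
    have e12 := hadj (t+1) (t+2) (by omega) (by omega) (by omega) (by omega) (by omega)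
    have e10 : c s(g (t+1), g t) = τ := by rw [csym]; exact e01
    have e20 : c s(g (t+2), g t) = τ := by rw [csym]; exact e02
    have e21 : c s(g (t+2), g (t+1)) = τ := by rw [csym]; exact e12
    constructor
    · rcases hyp with h | h | h
      · rcases twoA2 (g t) (g (t+1)) (g (t+2)) h d01 d02 d12 e01 e02 e12 with h' | h'
        · exact Or.inl ⟨h, h'⟩
        · exact Or.inr (Or.inl ⟨h, h'⟩)
      · rcases twoA2 (g (t+1)) (g t) (g (t+2)) h d01.symm d12 d02 e10 e12 e02 with h' | h'
        · exact Or.inl ⟨h', h⟩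
        · exact Or.inr (Or.inr ⟨h, h'⟩)
      · rcases twoA2 (g (t+2)) (g t) (g (t+1)) h d02.symm d12.symm d01 e20 e21 e01 with h' | h'
        · exact Or.inr (Or.inl ⟨h', h⟩)
        · exact Or.inr (Or.inr ⟨h', h⟩)
    · obtain ⟨p0, hp01, hp02, hp0⟩ : ∃ p0, t ≤ p0 ∧ p0 ≤ t + 2 ∧ g p0 ∈ A2 := by
        rcases hyp with h | h | h
        · exact ⟨t, by omega, by omega, h⟩
        · exact ⟨t+1, by omega, by omega, h⟩
        · exact ⟨t+2, by omega, by omega, h⟩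
      intro p hp1 hp2
      exact nearA2 (g p0) (g p) hp0 (winfact p0 p (by omega) (by omega) (by omega) (by omega))
  · -- H3
    intro t ht hall
    have d01 := hne t (t+1) (by omega) (by omega) (by omega)
    have d02 := hne t (t+2) (by omega) (by omega) (by omega)
    have d12 := hne (t+1) (t+2) (by omega) (by omega) (by omega)
    have e01 := hadj t (t+1) (by omega) (by omega) (by omega) (by omega) (by omega)
    have e02 := hadj t (t+2) (by omega) (by omega) (by omega) (by omega) (by omega)
    have e12 := hadj (t+1) (t+2) (by omega) (by omega) (by omega) (by omega) (by omega)
    have h0 := hall t (by omega) (by omega)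
    have h1 := hall (t+1) (by omega) (by omega)
    have h2 := hall (t+2) (by omega) (by omega)
    exact triB (g t) (g (t+1)) (g (t+2)) d01 d02 d12 e01 e02 e12
      h0.1 h0.2 h1.1 h1.2 h2.1 h2.2

/-- For every `n ≥ 2`, the explicit red/blue colouring of the complete graph
on `9n - 4` vertices described in the paper (with `|X₁| = |X₂| = |Y₁| = |Y₂| = 2n - 1`,
`|Z| = n - 1`, one extra vertex `z`, and the edges inside `Z ∪ {z}` coloured arbitrarily)
contains no monochromatic copy of `P_{3n}²`, and hence none of `C_{3n}²`.
Colours: `true` = red, `false` = blue. -/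
theorem lower_bound_construction_P3n (n : ℕ) (hn : 2 ≤ n)
    (X1 X2 Y1 Y2 Z : Finset (Fin (9 * n - 4))) (z : Fin (9 * n - 4))
    (hdisj : ([X1, X2, Y1, Y2, Z, {z}] : List (Finset (Fin (9 * n - 4)))).Pairwise Disjoint)
    (hcover : X1 ∪ X2 ∪ Y1 ∪ Y2 ∪ Z ∪ {z} = Finset.univ)
    (hX1 : X1.card = 2 * n - 1) (hX2 : X2.card = 2 * n - 1)
    (hY1 : Y1.card = 2 * n - 1) (hY2 : Y2.card = 2 * n - 1)
    (hZ : Z.card = n - 1)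
    (c : Sym2 (Fin (9 * n - 4)) → Bool)
    (hX1in : ∀ u ∈ X1, ∀ v ∈ X1, u ≠ v → c s(u, v) = false)
    (hX2in : ∀ u ∈ X2, ∀ v ∈ X2, u ≠ v → c s(u, v) = false)
    (hY1in : ∀ u ∈ Y1, ∀ v ∈ Y1, u ≠ v → c s(u, v) = true)
    (hY2in : ∀ u ∈ Y2, ∀ v ∈ Y2, u ≠ v → c s(u, v) = true)
    (hX1X2 : ∀ u ∈ X1, ∀ v ∈ X2, c s(u, v) = true)
    (hX1Z : ∀ u ∈ X1, ∀ v ∈ Z, c s(u, v) = true)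
    (hX2Z : ∀ u ∈ X2, ∀ v ∈ Z, c s(u, v) = true)
    (hX1Y2 : ∀ u ∈ X1, ∀ v ∈ Y2, c s(u, v) = true)
    (hX2Y1 : ∀ u ∈ X2, ∀ v ∈ Y1, c s(u, v) = true)
    (hY1Y2 : ∀ u ∈ Y1, ∀ v ∈ Y2, c s(u, v) = false)
    (hY1Z : ∀ u ∈ Y1, ∀ v ∈ Z, c s(u, v) = false)
    (hY2Z : ∀ u ∈ Y2, ∀ v ∈ Z, c s(u, v) = false)
    (hX1Y1 : ∀ u ∈ X1, ∀ v ∈ Y1, c s(u, v) = false)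
    (hX2Y2 : ∀ u ∈ X2, ∀ v ∈ Y2, c s(u, v) = false)
    (hzX : ∀ v ∈ X1 ∪ X2, c s(z, v) = false)
    (hzY : ∀ v ∈ Y1 ∪ Y2, c s(z, v) = true) :
    ¬HasMonoCopy (pathSq (3 * n)) c ∧ ¬HasMonoCopy (cycleSq (3 * n)) c := by
  simp only [List.pairwise_cons, List.mem_cons, List.mem_singleton, List.not_mem_nil,
    forall_eq_or_imp, forall_eq, List.Pairwise.nil, and_true] at hdisj
  obtain ⟨⟨dX1X2, dX1Y1, dX1Y2, dX1Z, dX1z⟩, ⟨dX2Y1, dX2Y2, dX2Z, dX2z⟩,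
    ⟨dY1Y2, dY1Z, dY1z⟩, ⟨dY2Z, dY2z⟩, dZz⟩ := hdisj
  have hmem : ∀ v : Fin (9*n-4), v ∈ X1 ∨ v ∈ X2 ∨ v ∈ Y1 ∨ v ∈ Y2 ∨ v ∈ Z ∨ v = z := by
    intro v
    have hv : v ∈ X1 ∪ X2 ∪ Y1 ∪ Y2 ∪ Z ∪ {z} := by rw [hcover]; exact Finset.mem_univ v
    simp only [Finset.mem_union, Finset.mem_singleton] at hv
    tauto
  have key : ¬HasMonoCopy (pathSq (3 * n)) c := by
    rintro ⟨b, f, hf⟩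
    have h31 : 3*n - 1 < 3*n := by omega
    set g : ℕ → Fin (9*n-4) := fun i => f ⟨min i (3*n-1), by omega⟩ with hgdef
    have hg : ∀ i j, i < 3*n → j < 3*n → g i = g j → i = j := by
      intro i j hi hj h
      have := f.injective h
      have := congrArg Fin.val this
      simp only at this
      omega
    have hadj : ∀ i j, i < 3*n → j < 3*n → i ≠ j → i ≤ j+2 → j ≤ i+2 →
        c s(g i, g j) = b := by
      intro i j hi hj hij h1 h2
      apply hf
      refine ⟨?_, ?_, ?_⟩
      · simp only [ne_eq, Fin.mk.injEq]
        omega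
      · simp only
        omega
      · simp only
        omega
    cases b with
    | true =>
      exact colourCaseAux n hn Y1 Y2 X2 X1 Z z c true
        (fun v => by have := hmem v; tauto)
        (le_of_eq hY1) (le_of_eq hY2) (le_of_eq hZ)
        dY1Y2 dY1Z dY2Z dX1X2.symm
        (fun u hu v hv => by simp [hY1Y2 u hu v hv])
        (fun u hu v hv => by simp [hY1Z u hu v hv])
        (fun u hu v hv => by simp [hY2Z u hu v hv])
        (fun u hu v hv => by rw [Sym2.eq_swap, hX1Y1 v hv u hu]; simp)
        (fun u hu v hv => by rw [Sym2.eq_swap, hX2Y2 v hv u hu]; simp)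
        (fun u hu v hv huv => by simp [hX2in u hu v hv huv])
        (fun u hu v hv huv => by simp [hX1in u hu v hv huv])
        (fun v hv => by simp [hzX v (Finset.mem_union_right _ hv)])
        (fun v hv => by simp [hzX v (Finset.mem_union_left _ hv)])
        g hg hadj
    | false =>
      exact colourCaseAux n hn X1 X2 Y1 Y2 Z z c false
        (fun v => by have := hmem v; tauto)
        (le_of_eq hX1) (le_of_eq hX2) (le_of_eq hZ)
        dX1X2 dX1Z dX2Z dY1Y2
        (fun u hu v hv => by simp [hX1X2 u hu v hv])
        (fun u hu v hv => by simp [hX1Z u hu v hv])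
        (fun u hu v hv => by simp [hX2Z u hu v hv])
        (fun u hu v hv => by simp [hX1Y2 u hu v hv])
        (fun u hu v hv => by simp [hX2Y1 u hu v hv])
        (fun u hu v hv huv => by simp [hY1in u hu v hv huv])
        (fun u hu v hv huv => by simp [hY2in u hu v hv huv])
        (fun v hv => by simp [hzY v (Finset.mem_union_left _ hv)])
        (fun v hv => by simp [hzY v (Finset.mem_union_right _ hv)])
        g hg hadj
  refine ⟨key, ?_⟩
  rintro ⟨b, f, hf⟩
  apply key
  haveI : NeZero (3*n) := ⟨by omega⟩
  refine ⟨b, ⟨fun i => f ((i : ℕ) : ZMod (3*n)), ?_⟩, ?_⟩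
  · intro i j h
    have h2 : ((i : ℕ) : ZMod (3*n)) = ((j : ℕ) : ZMod (3*n)) := f.injective h
    have hv := congrArg ZMod.val h2
    rw [ZMod.val_cast_of_lt i.isLt, ZMod.val_cast_of_lt j.isLt] at hv
    exact Fin.ext hv
  · intro u v huv
    obtain ⟨hne, h1, h2⟩ := huv
    apply hf
    have hval : (u : ℕ) ≠ (v : ℕ) := fun h => hne (Fin.ext h)
    refine ⟨?_, ?_⟩
    · intro h
      apply hne
      apply Fin.ext
      have hv := congrArg ZMod.val h
      rwa [ZMod.val_cast_of_lt u.isLt, ZMod.val_cast_of_lt v.isLt] at hv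
    · have hcases : (v : ℕ) = (u : ℕ) + 1 ∨ (v : ℕ) = (u : ℕ) + 2 ∨
          (u : ℕ) = (v : ℕ) + 1 ∨ (u : ℕ) = (v : ℕ) + 2 := by omega
      rcases hcases with h | h | h | h
      · left; rw [h]; push_cast; ring
      · right; left; rw [h]; push_cast; ring
      · right; right; left; rw [h]; push_cast; ring
      · right; right; right; rw [h]; push_cast; ring
end

section
/- There exist ε_0 > 0 and t_0 ∈ ℝ such that the following holds for any 0 < ε < ε_0 and any t > t_0. Let G be a graph on at least 2(1+3ε)t vertices with minimum degree at least |V(G)| − εt. Then any 2-edge-colouring of the edges of G with colours red and blue contains a red matching covering at least 2(1+ε)t vertices, or a blue connected matching covering at least min{ |V(G)| − (1+2ε)t , 2|V(G)| − 4(1+2ε)t } vertices. -/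
namespace RMBCM
open Finset
variable {V : Type*} [DecidableEq V]

noncomputable def eVerts (e : Sym2 V) : Finset V :=
  {e.out.1, e.out.2}

lemma mem_eVerts {e : Sym2 V} {x : V} : x ∈ eVerts e ↔ x ∈ e := by
  have h : e = s(e.out.1, e.out.2) := by conv_lhs => rw [← e.out_eq]
  constructor
  · intro hx
    rcases Finset.mem_insert.1 hx with h1 | h1
    · rw [h, h1]; exact Sym2.mem_mk_left _ _
    · rw [h, Finset.mem_singleton.1 h1]; exact Sym2.mem_mk_right _ _
  · intro hx
    rw [h, Sym2.mem_iff] at hx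
    rcases hx with h1 | h1 <;> simp [eVerts, h1]

lemma eVerts_mk (a b : V) : eVerts s(a, b) = {a, b} := by
  ext x; rw [mem_eVerts, Sym2.mem_iff]; simp

lemma eVerts_card {e : Sym2 V} (h : ¬ e.IsDiag) : (eVerts e).card = 2 := by
  obtain ⟨a, b⟩ := e
  rw [eVerts_mk]
  rw [Sym2.mk_isDiag_iff] at h
  rw [Finset.card_insert_of_notMem (by simp [h]), Finset.card_singleton]

/-- support of a matching -/
noncomputable def msupp (M : Finset (Sym2 V)) : Finset V := M.biUnion eVerts

lemma mem_msupp {M : Finset (Sym2 V)} {x : V} : x ∈ msupp M ↔ ∃ e ∈ M, x ∈ e := by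
  simp [msupp, mem_eVerts]

lemma msupp_card {G : SimpleGraph V} {M : Finset (Sym2 V)} (h : IsMatching' G M) :
    (msupp M).card = 2 * M.card := by
  rw [msupp, Finset.card_biUnion, Finset.sum_congr rfl (fun e he => eVerts_card
      (fun hd => (G.not_isDiag_of_mem_edgeSet (h.1 e he)) hd))]
  · simp [Finset.sum_const, mul_comm]
  · intro x hx y hy hxy
    rw [Function.onFun, Finset.disjoint_left]
    intro a ha hb
    exact h.2 hx hy hxy a (mem_eVerts.1 ha) (mem_eVerts.1 hb)

lemma matching_insert {G : SimpleGraph V} {M : Finset (Sym2 V)} (h : IsMatching' G M)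
    {e : Sym2 V} (he : e ∈ G.edgeSet) (hd : ∀ x ∈ e, x ∉ msupp M) :
    IsMatching' G (insert e M) ∧ (insert e M).card = M.card + 1 := by
  have heM : e ∉ M := by
    intro hmem
    obtain ⟨a, b⟩ := e
    exact hd a (Sym2.mem_mk_left a b) (mem_msupp.2 ⟨_, hmem, Sym2.mem_mk_left a b⟩)
  refine ⟨⟨?_, ?_⟩, Finset.card_insert_of_notMem heM⟩
  · intro f hf
    rcases Finset.mem_insert.1 hf with rfl | hf
    · exact he
    · exact h.1 f hf
  · intro f hf g hg hfg x hxf hxg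
    simp only [Finset.coe_insert, Set.mem_insert_iff] at hf hg
    rcases hf with rfl | hf
    · rcases hg with rfl | hg
      · exact absurd rfl hfg
      · exact (hd x hxf) (mem_msupp.2 ⟨g, hg, hxg⟩)
    · rcases hg with rfl | hg
      · exact (hd x hxg) (mem_msupp.2 ⟨f, hf, hxf⟩)
      · exact h.2 hf hg hfg x hxf hxg

/-- Augmenting: replace one edge `e` of a matching by two new edges. -/
lemma matching_augment {G : SimpleGraph V} {M : Finset (Sym2 V)} (h : IsMatching' G M)
    {e e1 e2 : Sym2 V} (he : e ∈ M) (he1 : e1 ∈ G.edgeSet) (he2 : e2 ∈ G.edgeSet)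
    (h1 : ∀ x ∈ e1, x ∈ e ∨ x ∉ msupp M) (h2 : ∀ x ∈ e2, x ∈ e ∨ x ∉ msupp M)
    (h12 : ∀ x ∈ e1, x ∉ e2)
    (hu1 : ∃ x ∈ e1, x ∉ msupp M) (hu2 : ∃ x ∈ e2, x ∉ msupp M) :
    IsMatching' G (insert e1 (insert e2 (M.erase e))) ∧
      (insert e1 (insert e2 (M.erase e))).card = M.card + 1 := by
  -- key fact: vertices of e1/e2 are not in any edge of M.erase e
  have key : ∀ (f : Sym2 V), f ∈ M.erase e → (∀ x ∈ e1, x ∉ f) ∧ (∀ x ∈ e2, x ∉ f) := by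
    intro f hf
    have hfM := Finset.mem_of_mem_erase hf
    have hfe : f ≠ e := Finset.ne_of_mem_erase hf
    constructor
    · intro x hx hxf
      rcases h1 x hx with hxe | hxs
      · exact h.2 hfM he hfe x hxf hxe
      · exact hxs (mem_msupp.2 ⟨f, hfM, hxf⟩)
    · intro x hx hxf
      rcases h2 x hx with hxe | hxs
      · exact h.2 hfM he hfe x hxf hxe
      · exact hxs (mem_msupp.2 ⟨f, hfM, hxf⟩)
  have he2ne : e2 ∉ M.erase e := by
    obtain ⟨x, hx, -⟩ := hu2
    intro hmem
    exact (key e2 hmem).2 x hx hx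
  have he1ne : e1 ∉ insert e2 (M.erase e) := by
    obtain ⟨x, hx, -⟩ := hu1
    intro hmem
    rcases Finset.mem_insert.1 hmem with rfl | hmem
    · exact h12 x hx hx
    · exact (key e1 hmem).1 x hx hx
  have herase : (M.erase e).card = M.card - 1 := Finset.card_erase_of_mem he
  have hMpos : 1 ≤ M.card := Finset.card_pos.2 ⟨e, he⟩
  refine ⟨⟨?_, ?_⟩, ?_⟩
  · intro f hf
    rcases Finset.mem_insert.1 hf with rfl | hf
    · exact he1
    rcases Finset.mem_insert.1 hf with rfl | hf
    · exact he2
    · exact h.1 f (Finset.mem_of_mem_erase hf)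
  · intro f hf g hg hfg x hxf hxg
    simp only [Finset.coe_insert, Set.mem_insert_iff, Finset.mem_coe] at hf hg
    rcases hf with hf | hf | hf <;> rcases hg with hg | hg | hg <;>
      (try subst hf) <;> (try subst hg)
    · exact absurd rfl hfg
    · exact h12 x hxf hxg
    · exact (key g hg).1 x hxf hxg
    · exact h12 x hxg hxf
    · exact absurd rfl hfg
    · exact (key g hg).2 x hxf hxg
    · exact (key f hf).1 x hxg hxf
    · exact (key f hf).2 x hxg hxf
    · exact h.2 (Finset.mem_of_mem_erase hf) (Finset.mem_of_mem_erase hg) hfg x hxf hxg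
  · rw [Finset.card_insert_of_notMem he1ne, Finset.card_insert_of_notMem he2ne, herase]
    omega

open scoped Classical in
lemma near_perfect_matching [Fintype V] {G : SimpleGraph V} (W : Finset V) (D : ℝ)
    (hdeg : ∀ v ∈ W, D ≤ ((W.filter (G.Adj v)).card : ℝ))
    (hW : (W.card : ℝ) ≤ 2 * D + 1) :
    ∃ M : Finset (Sym2 V), IsMatching' G M ∧ (∀ e ∈ M, ∀ x ∈ e, x ∈ W) ∧
      (W.card : ℝ) ≤ 2 * M.card + 1 := by
  classical
  set S : Finset (Finset (Sym2 V)) :=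
    Finset.univ.filter (fun M => IsMatching' G M ∧ ∀ e ∈ M, ∀ x ∈ e, x ∈ W) with hS
  have hSne : S.Nonempty := ⟨∅, by rw [hS, Finset.mem_filter]; simp [IsMatching']⟩
  obtain ⟨M, hMS, hMmax⟩ := S.exists_max_image Finset.card hSne
  rw [hS, Finset.mem_filter] at hMS
  obtain ⟨-, hM, hMW⟩ := hMS
  have hmax : ∀ M' : Finset (Sym2 V), IsMatching' G M' → (∀ e ∈ M', ∀ x ∈ e, x ∈ W) →
      M'.card ≤ M.card := by
    intro M' h1 h2
    exact hMmax M' (by rw [hS, Finset.mem_filter]; exact ⟨Finset.mem_univ _, h1, h2⟩)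
  refine ⟨M, hM, hMW, ?_⟩
  have hsuppW : msupp M ⊆ W := by
    intro x hx
    obtain ⟨e, he, hxe⟩ := mem_msupp.1 hx
    exact hMW e he x hxe
  set Z := W \ msupp M with hZ
  have hWcard : W.card = 2 * M.card + Z.card := by
    rw [hZ, Finset.card_sdiff_of_subset hsuppW, msupp_card hM]
    have := Finset.card_le_card hsuppW
    rw [msupp_card hM] at this
    omega
  by_cases hZ1 : Z.card ≤ 1
  · push_cast [hWcard]
    have : (Z.card : ℝ) ≤ 1 := by exact_mod_cast hZ1
    linarith
  exfalso
  obtain ⟨u, hu, w, hw, huw⟩ := (Finset.one_lt_card (s := Z)).1 (by omega)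
  have huW : u ∈ W := (Finset.mem_sdiff.1 hu).1
  have hwW : w ∈ W := (Finset.mem_sdiff.1 hw).1
  have huM : u ∉ msupp M := (Finset.mem_sdiff.1 hu).2
  have hwM : w ∉ msupp M := (Finset.mem_sdiff.1 hw).2
  -- no unmatched vertex of W is adjacent to another unmatched vertex
  have extend : ∀ a b : V, a ∉ msupp M → b ∉ msupp M → a ∈ W → b ∈ W → ¬ G.Adj a b := by
    intro a b ha hb haW hbW hadj
    have hins := matching_insert hM (G.mem_edgeSet.2 hadj) (by
      intro x hx
      rcases Sym2.mem_iff.1 hx with rfl | rfl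
      · exact ha
      · exact hb)
    have hle := hmax _ hins.1 (by
      intro e he x hxe
      rcases Finset.mem_insert.1 he with rfl | he
      · rcases Sym2.mem_iff.1 hxe with rfl | rfl
        · exact haW
        · exact hbW
      · exact hMW e he x hxe)
    rw [hins.2] at hle
    omega
  set Nu := W.filter (G.Adj u) with hNu
  set Nw := W.filter (G.Adj w) with hNw
  have hNuM : Nu ⊆ msupp M := by
    intro v hv
    rw [hNu, Finset.mem_filter] at hv
    by_contra hvM
    exact extend u v huM hvM huW hv.1 hv.2
  have hNwM : Nw ⊆ msupp M := by
    intro v hv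
    rw [hNw, Finset.mem_filter] at hv
    by_contra hvM
    exact extend w v hwM hvM hwW hv.1 hv.2
  -- per-edge bound
  have peredge : ∀ e ∈ M, (Nu ∩ eVerts e).card + (Nw ∩ eVerts e).card ≤ 2 := by
    intro e he
    have hx' : e = s(e.out.1, e.out.2) := by conv_lhs => rw [← e.out_eq]
    set x := e.out.1
    set y := e.out.2
    have hxy : x ≠ y := by
      intro hcon
      exact (G.not_isDiag_of_mem_edgeSet (hM.1 e he)) (by rw [hx', Sym2.mk_isDiag_iff]; exact hcon)
    have hxM : x ∈ msupp M := mem_msupp.2 ⟨e, he, by rw [hx']; exact Sym2.mem_mk_left _ _⟩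
    have hyM : y ∈ msupp M := mem_msupp.2 ⟨e, he, by rw [hx']; exact Sym2.mem_mk_right _ _⟩
    have hever : eVerts e = {x, y} := by rw [hx', eVerts_mk]
    have hxW : x ∈ W := hMW e he x (by rw [hx']; exact Sym2.mem_mk_left _ _)
    have hyW : y ∈ W := hMW e he y (by rw [hx']; exact Sym2.mem_mk_right _ _)
    -- augmenting move is impossible
    have noaug : ∀ a b : V, a ∉ msupp M → b ∉ msupp M → a ≠ b → a ∈ W → b ∈ W →
        G.Adj a x → G.Adj b y → False := by
      intro a b haM hbM hab haW hbW hax hby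
      have haug := matching_augment hM he (G.mem_edgeSet.2 hax) (G.mem_edgeSet.2 hby)
        (by intro z hz; rcases Sym2.mem_iff.1 hz with rfl | rfl
            · exact Or.inr haM
            · exact Or.inl (by rw [hx']; exact Sym2.mem_mk_left _ _))
        (by intro z hz; rcases Sym2.mem_iff.1 hz with rfl | rfl
            · exact Or.inr hbM
            · exact Or.inl (by rw [hx']; exact Sym2.mem_mk_right _ _))
        (by intro z hz hz2
            rcases Sym2.mem_iff.1 hz with rfl | rfl <;> rcases Sym2.mem_iff.1 hz2 with h2 | h2
            · exact hab h2
            · exact haM (h2 ▸ hyM)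
            · exact hbM (h2.symm ▸ hxM)
            · exact hxy h2)
        ⟨a, Sym2.mem_mk_left _ _, haM⟩ ⟨b, Sym2.mem_mk_left _ _, hbM⟩
      have hle := hmax _ haug.1 (by
        intro f hf z hzf
        rcases Finset.mem_insert.1 hf with rfl | hf
        · rcases Sym2.mem_iff.1 hzf with rfl | rfl
          · exact haW
          · exact hxW
        rcases Finset.mem_insert.1 hf with rfl | hf
        · rcases Sym2.mem_iff.1 hzf with rfl | rfl
          · exact hbW
          · exact hyW
        · exact hMW f (Finset.mem_of_mem_erase hf) z hzf)
      rw [haug.2] at hle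
      omega
    -- now count
    by_contra hcon
    push_neg at hcon
    have hsub : ∀ (N : Finset V), (N ∩ eVerts e).card =
        (if x ∈ N then 1 else 0) + (if y ∈ N then 1 else 0) := by
      intro N
      have : N ∩ eVerts e = ({x, y} : Finset V).filter (fun z => z ∈ N) := by
        ext z
        simp only [Finset.mem_inter, Finset.mem_filter, hever]
        tauto
      rw [this, Finset.filter_insert, Finset.filter_singleton]
      by_cases h1 : x ∈ N <;> by_cases h2 : y ∈ N <;>
        simp [h1, h2, Finset.card_insert_of_notMem, Finset.mem_singleton, hxy]
    rw [hsub Nu, hsub Nw] at hcon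
    have hadj : ∀ z ∈ Nu, G.Adj u z := fun z hz => (Finset.mem_filter.1 hz).2
    have hadjw : ∀ z ∈ Nw, G.Adj w z := fun z hz => (Finset.mem_filter.1 hz).2
    -- from sum ≥ 3, get (u~x ∧ w~y) ∨ (u~y ∧ w~x)
    by_cases h1 : x ∈ Nu <;> by_cases h2 : y ∈ Nu <;> by_cases h3 : x ∈ Nw <;>
      by_cases h4 : y ∈ Nw <;> simp [h1, h2, h3, h4] at hcon
    all_goals first
      | exact noaug u w huM hwM huw huW hwW (hadj x h1) (hadjw y h4)
      | (exact noaug w u hwM huM (Ne.symm huw) hwW huW (hadjw x h3) (hadj y h2))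
  -- sum the per-edge bounds
  have hNucard : Nu.card ≤ (M.biUnion (fun e => Nu ∩ eVerts e)).card := by
    apply Finset.card_le_card
    intro z hz
    obtain ⟨e, he, hze⟩ := mem_msupp.1 (hNuM hz)
    exact Finset.mem_biUnion.2 ⟨e, he, Finset.mem_inter.2 ⟨hz, mem_eVerts.2 hze⟩⟩
  have hNwcard : Nw.card ≤ (M.biUnion (fun e => Nw ∩ eVerts e)).card := by
    apply Finset.card_le_card
    intro z hz
    obtain ⟨e, he, hze⟩ := mem_msupp.1 (hNwM hz)
    exact Finset.mem_biUnion.2 ⟨e, he, Finset.mem_inter.2 ⟨hz, mem_eVerts.2 hze⟩⟩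
  have hsumu := Finset.card_biUnion_le (s := M) (t := fun e => Nu ∩ eVerts e)
  have hsumw := Finset.card_biUnion_le (s := M) (t := fun e => Nw ∩ eVerts e)
  have htot : Nu.card + Nw.card ≤ 2 * M.card := by
    have : (∑ e ∈ M, (Nu ∩ eVerts e).card) + (∑ e ∈ M, (Nw ∩ eVerts e).card) ≤ 2 * M.card := by
      rw [← Finset.sum_add_distrib]
      calc (∑ e ∈ M, ((Nu ∩ eVerts e).card + (Nw ∩ eVerts e).card))
          ≤ ∑ e ∈ M, 2 := Finset.sum_le_sum peredge
        _ = 2 * M.card := by rw [Finset.sum_const, smul_eq_mul, mul_comm]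
    omega
  -- final contradiction
  have hDu := hdeg u huW
  have hDw := hdeg w hwW
  rw [← hNu] at hDu
  rw [← hNw] at hDw
  have h2M : (2 : ℝ) * D ≤ 2 * M.card := by
    have hcast : ((Nu.card : ℝ)) + Nw.card ≤ 2 * M.card := by exact_mod_cast htot
    linarith
  have hZ2 : 2 ≤ Z.card := by omega
  have : (W.card : ℝ) = 2 * M.card + Z.card := by exact_mod_cast hWcard
  have hZ2' : (2 : ℝ) ≤ Z.card := by exact_mod_cast hZ2
  linarith
end RMBCM

open RMBCM Finset in
/-- red matching or blue connected matching.
Colours: `true` = red, `false` = blue. -/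
theorem red_matching_or_blue_connected_matching :
    ∃ eps0 t0 : ℝ, 0 < eps0 ∧ ∀ eps : ℝ, 0 < eps → eps < eps0 → ∀ t : ℝ, t0 < t →
      ∀ (V : Type) [Fintype V] (G : SimpleGraph V) (c : Sym2 V → Bool),
        2 * (1 + 3 * eps) * t ≤ (Fintype.card V : ℝ) →
        (∀ v : V, (Fintype.card V : ℝ) - eps * t ≤ (gdeg G v : ℝ)) →
        (∃ M : Finset (Sym2 V), IsMatching' (colourSubgraph G c true) M ∧
          2 * (1 + eps) * t ≤ ((2 * M.card : ℕ) : ℝ)) ∨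
        (∃ M : Finset (Sym2 V), IsConnMatching (colourSubgraph G c false) M ∧
          min ((Fintype.card V : ℝ) - (1 + 2 * eps) * t)
              (2 * (Fintype.card V : ℝ) - 4 * (1 + 2 * eps) * t) ≤ ((2 * M.card : ℕ) : ℝ)) := by
  refine ⟨1, 1, one_pos, ?_⟩
  intro eps heps heps1 t ht V _ G c hcard hdeg
  classical
  set n := Fintype.card V with hn
  set Red := colourSubgraph G c true with hRed
  set Blue := colourSubgraph G c false with hBlue
  have ht0 : (0:ℝ) < t := lt_trans one_pos ht
  have hn0 : 0 < n := by
    by_contra hcon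
    have : n = 0 := by omega
    rw [this] at hcard
    push_cast at hcard
    nlinarith
  -- degree facts
  have hgdeg : ∀ v : V, (gdeg G v : ℝ) = ((univ.filter (fun u => G.Adj v u)).card : ℝ) := by
    intro v
    rw [gdeg, Set.ncard_eq_toFinset_card']
    congr 2
    ext u
    simp
  have hnon : ∀ (v : V) (A : Finset V), v ∉ A →
      ((A.filter (fun u => ¬ G.Adj v u)).card : ℝ) ≤ eps * t - 1 := by
    intro v A hvA
    have hsub : A.filter (fun u => ¬ G.Adj v u) ⊆
        (univ.filter (fun u => ¬ G.Adj v u)).erase v := by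
      intro u hu
      rw [Finset.mem_filter] at hu
      refine Finset.mem_erase.2 ⟨fun hc => hvA (hc ▸ hu.1), ?_⟩
      exact Finset.mem_filter.2 ⟨Finset.mem_univ _, hu.2⟩
    have hv : v ∈ univ.filter (fun u => ¬ G.Adj v u) :=
      Finset.mem_filter.2 ⟨Finset.mem_univ _, G.loopless.irrefl v⟩
    have h1 : (A.filter (fun u => ¬ G.Adj v u)).card ≤
        (univ.filter (fun u => ¬ G.Adj v u)).card - 1 := by
      have := Finset.card_le_card hsub
      rw [Finset.card_erase_of_mem hv] at this
      exact this
    have h2 : (univ.filter (fun u => G.Adj v u)).card +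
        (univ.filter (fun u => ¬ G.Adj v u)).card = n := by
      rw [Finset.card_filter_add_card_filter_not]
      simp [hn]
    have h3 := hdeg v
    rw [hgdeg v] at h3
    have hc1 : 1 ≤ (univ.filter (fun u => ¬ G.Adj v u)).card := Finset.card_pos.2 ⟨v, hv⟩
    have hcast : ((A.filter (fun u => ¬ G.Adj v u)).card : ℝ) ≤
        ((univ.filter (fun u => ¬ G.Adj v u)).card : ℝ) - 1 := by
      have := h1
      have : ((A.filter (fun u => ¬ G.Adj v u)).card : ℝ) ≤
          (((univ.filter (fun u => ¬ G.Adj v u)).card - 1 : ℕ) : ℝ) := by exact_mod_cast this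
      rwa [Nat.cast_sub hc1, Nat.cast_one] at this
    have hcast2 : ((univ.filter (fun u => G.Adj v u)).card : ℝ) +
        ((univ.filter (fun u => ¬ G.Adj v u)).card : ℝ) = n := by exact_mod_cast h2
    linarith
  have het1 : 1 ≤ eps * t := by
    obtain ⟨v⟩ := Fintype.card_pos_iff.1 hn0
    have h3 := hdeg v
    rw [hgdeg v] at h3
    have hsub : univ.filter (fun u => G.Adj v u) ⊆ univ.erase v := by
      intro u hu
      rw [Finset.mem_filter] at hu
      exact Finset.mem_erase.2 ⟨fun hc => G.loopless.irrefl v (hc ▸ hu.2), Finset.mem_univ _⟩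
    have h4 : (univ.filter (fun u => G.Adj v u)).card ≤ n - 1 := by
      have := Finset.card_le_card hsub
      rwa [Finset.card_erase_of_mem (Finset.mem_univ v), Finset.card_univ] at this
    have h5 : ((univ.filter (fun u => G.Adj v u)).card : ℝ) ≤ (n : ℝ) - 1 := by
      have : ((univ.filter (fun u => G.Adj v u)).card : ℝ) ≤ ((n - 1 : ℕ) : ℝ) := by
        exact_mod_cast h4
      rwa [Nat.cast_sub hn0, Nat.cast_one] at this
    linarith
  -- maximum red matching
  obtain ⟨M, hMS, hMmax'⟩ := (Finset.univ.filter (fun M : Finset (Sym2 V) =>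
      IsMatching' Red M)).exists_max_image Finset.card ⟨∅, by rw [Finset.mem_filter]; simp [IsMatching']⟩
  rw [Finset.mem_filter] at hMS
  have hM : IsMatching' Red M := hMS.2
  have hMmax : ∀ M' : Finset (Sym2 V), IsMatching' Red M' → M'.card ≤ M.card := by
    intro M' h1
    exact hMmax' M' (Finset.mem_filter.2 ⟨Finset.mem_univ _, h1⟩)
  by_cases hbig : 2 * (1 + eps) * t ≤ ((2 * M.card : ℕ) : ℝ)
  · exact Or.inl ⟨M, hM, hbig⟩
  right
  push_neg at hbig
  have hm : (2 * (M.card : ℝ)) < 2 * (1 + eps) * t := by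
    push_cast at hbig
    linarith
  
  -- the set of unmatched vertices
  set U := univ \ msupp M with hUdef
  have hUmem : ∀ {u : V}, u ∈ U ↔ u ∉ msupp M := by
    intro u
    rw [hUdef, Finset.mem_sdiff]
    simp
  have hUcard : U.card + 2 * M.card = n := by
    rw [hUdef, Finset.card_sdiff_of_subset (Finset.subset_univ _), msupp_card hM, Finset.card_univ, ← hn]
    have := Finset.card_le_card (Finset.subset_univ (msupp M))
    rw [msupp_card hM, Finset.card_univ, ← hn] at this
    omega
  -- all edges inside U are blue
  have hUblue : ∀ u ∈ U, ∀ w ∈ U, G.Adj u w → Blue.Adj u w := by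
    intro u hu w hw hadj
    refine ⟨hadj, ?_⟩
    by_contra hcb
    have hcb' : c s(u, w) = true := by
      cases hcbv : c s(u, w)
      · exact absurd hcbv hcb
      · rfl
    have hins := matching_insert hM (e := s(u, w)) (by
        rw [SimpleGraph.mem_edgeSet]; exact ⟨hadj, hcb'⟩) (by
        intro x hx
        rcases Sym2.mem_iff.1 hx with rfl | rfl
        · exact hUmem.1 hu
        · exact hUmem.1 hw)
    have := hMmax _ hins.1
    rw [hins.2] at this
    omega
  have hUgt : 4 * eps * t < (U.card : ℝ) := by
    have hcast : (U.card : ℝ) + 2 * M.card = n := by exact_mod_cast hUcard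
    linarith
  -- blue min-degree within subsets of U
  have hblue_deg : ∀ A : Finset V, A ⊆ U → ∀ v ∈ U,
      (A.card : ℝ) - eps * t ≤ ((A.filter (Blue.Adj v)).card : ℝ) := by
    intro A hAU v hvU
    have hsub : A.filter (fun u => ¬ Blue.Adj v u) ⊆
        insert v ((A.erase v).filter (fun u => ¬ G.Adj v u)) := by
      intro u hu
      rw [Finset.mem_filter] at hu
      by_cases huv : u = v
      · exact Finset.mem_insert.2 (Or.inl huv)
      refine Finset.mem_insert.2 (Or.inr (Finset.mem_filter.2
        ⟨Finset.mem_erase.2 ⟨huv, hu.1⟩, ?_⟩))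
      intro hadj
      exact hu.2 (hUblue v hvU u (hAU hu.1) hadj)
    have h1 : ((A.filter (fun u => ¬ Blue.Adj v u)).card : ℝ) ≤ eps * t := by
      have hc := Finset.card_le_card hsub
      have hc2 := Finset.card_insert_le v ((A.erase v).filter (fun u => ¬ G.Adj v u))
      have hc3 := hnon v (A.erase v) (Finset.notMem_erase v A)
      have : ((A.filter (fun u => ¬ Blue.Adj v u)).card : ℝ) ≤
          (((A.erase v).filter (fun u => ¬ G.Adj v u)).card : ℝ) + 1 := by
        have := le_trans hc hc2
        exact_mod_cast this
      linarith
    have h2 : (A.filter (Blue.Adj v)).card + (A.filter (fun u => ¬ Blue.Adj v u)).card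
        = A.card := Finset.card_filter_add_card_filter_not _
    have h2' : ((A.filter (Blue.Adj v)).card : ℝ) +
        ((A.filter (fun u => ¬ Blue.Adj v u)).card : ℝ) = A.card := by exact_mod_cast h2
    linarith
  -- any two vertices of U are connected in blue
  have hreach : ∀ u ∈ U, ∀ w ∈ U, Blue.Reachable u w := by
    intro u hu w hw
    by_cases huw : u = w
    · rw [huw]
    by_cases hadj : G.Adj u w
    · exact (hUblue u hu w hw hadj).reachable
    have hA := hblue_deg U (Finset.Subset.refl U) u hu
    have hB := hblue_deg U (Finset.Subset.refl U) w hw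
    have hun : (U.filter (Blue.Adj u)) ∪ (U.filter (Blue.Adj w)) ⊆ U :=
      Finset.union_subset (Finset.filter_subset _ _) (Finset.filter_subset _ _)
    have hinter : 0 < ((U.filter (Blue.Adj u)) ∩ (U.filter (Blue.Adj w))).card := by
      have h1 := Finset.card_union_add_card_inter (U.filter (Blue.Adj u))
        (U.filter (Blue.Adj w))
      have h2 := Finset.card_le_card hun
      have h3 : ((U.filter (Blue.Adj u)).card : ℝ) + ((U.filter (Blue.Adj w)).card : ℝ) ≤
          (U.card : ℝ) + (((U.filter (Blue.Adj u)) ∩ (U.filter (Blue.Adj w))).card : ℝ) := by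
        have : (U.filter (Blue.Adj u)).card + (U.filter (Blue.Adj w)).card ≤
            U.card + ((U.filter (Blue.Adj u)) ∩ (U.filter (Blue.Adj w))).card := by omega
        exact_mod_cast this
      have : (0 : ℝ) < (((U.filter (Blue.Adj u)) ∩ (U.filter (Blue.Adj w))).card : ℝ) := by
        nlinarith
      exact_mod_cast this
    obtain ⟨a, ha⟩ := Finset.card_pos.1 hinter
    rw [Finset.mem_inter, Finset.mem_filter, Finset.mem_filter] at ha
    exact (ha.1.2.reachable).trans ha.2.2.symm.reachable
  
  -- each red matching edge has an endpoint with at most one red neighbour in U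
  have hgood : ∀ e ∈ M, ∃ x, x ∈ e ∧
      (U.filter (fun u => G.Adj x u ∧ c s(x, u) = true)).card ≤ 1 := by
    intro e he
    by_contra hcon
    push_neg at hcon
    have hx' : e = s(e.out.1, e.out.2) := by conv_lhs => rw [← e.out_eq]
    set a := e.out.1 with hadef
    set b := e.out.2 with hbdef
    have hae : a ∈ e := by rw [hx']; exact Sym2.mem_mk_left _ _
    have hbe : b ∈ e := by rw [hx']; exact Sym2.mem_mk_right _ _
    have hab : a ≠ b := by
      intro hc
      exact (Red.not_isDiag_of_mem_edgeSet (hM.1 e he)) (by rw [hx', Sym2.mk_isDiag_iff]; exact hc)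
    have haM : a ∈ msupp M := mem_msupp.2 ⟨e, he, hae⟩
    have hbM : b ∈ msupp M := mem_msupp.2 ⟨e, he, hbe⟩
    have hca := hcon a hae
    have hcb := hcon b hbe
    obtain ⟨u, hu⟩ := Finset.card_pos.1 (by omega :
      0 < (U.filter (fun w => G.Adj a w ∧ c s(a, w) = true)).card)
    obtain ⟨u', hu', huu'⟩ := Finset.exists_mem_ne (by omega :
      1 < (U.filter (fun w => G.Adj b w ∧ c s(b, w) = true)).card) u
    rw [Finset.mem_filter] at hu hu'
    have huU := hu.1
    have hu'U := hu'.1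
    have hured : Red.Adj a u := ⟨hu.2.1, hu.2.2⟩
    have hu'red : Red.Adj b u' := ⟨hu'.2.1, hu'.2.2⟩
    have huM : u ∉ msupp M := hUmem.1 huU
    have hu'M : u' ∉ msupp M := hUmem.1 hu'U
    have haug := matching_augment hM he (Red.mem_edgeSet.2 hured) (Red.mem_edgeSet.2 hu'red)
      (by intro z hz; rcases Sym2.mem_iff.1 hz with rfl | rfl
          · exact Or.inl hae
          · exact Or.inr huM)
      (by intro z hz; rcases Sym2.mem_iff.1 hz with rfl | rfl
          · exact Or.inl hbe
          · exact Or.inr hu'M)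
      (by intro z hz hz2
          rcases Sym2.mem_iff.1 hz with rfl | rfl <;> rcases Sym2.mem_iff.1 hz2 with h2 | h2
          · exact hab h2
          · exact hu'M (h2 ▸ haM)
          · exact huM (h2.symm ▸ hbM)
          · exact huu' h2.symm)
      ⟨u, Sym2.mem_mk_right _ _, huM⟩ ⟨u', Sym2.mem_mk_right _ _, hu'M⟩
    have hle := hMmax _ haug.1
    rw [haug.2] at hle
    omega
  
  -- numeric parameters
  set h : ℕ := ⌈2 * eps * t - 1⌉₊ with hhdef
  have hh1 : 2 * eps * t - 1 ≤ (h : ℝ) := Nat.le_ceil _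
  have hh2 : (h : ℝ) < 2 * eps * t := by
    have h0 : (0:ℝ) ≤ 2 * eps * t - 1 := by linarith
    have := Nat.ceil_lt_add_one h0
    rw [← hhdef] at this
    linarith
  have hhU : h < U.card := by
    have : (h : ℝ) < (U.card : ℝ) := by nlinarith
    exact_mod_cast this
  set K := U.card - h with hKdef
  have hKcast : (K : ℝ) = (U.card : ℝ) - h := by
    rw [hKdef, Nat.cast_sub (le_of_lt hhU)]
  set k := min M.card K with hkdef
  have hkm : k ≤ M.card := min_le_left _ _
  have hkK : k ≤ K := min_le_right _ _
  have hkh : k + h ≤ U.card := by omega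
  -- choose k red edges and good endpoints
  obtain ⟨M₀, hM₀sub, hM₀card⟩ := Finset.exists_subset_card_eq hkm
  have hgood' : ∀ e : {e // e ∈ M₀}, ∃ x, x ∈ e.val ∧
      (U.filter (fun u => G.Adj x u ∧ c s(x, u) = true)).card ≤ 1 :=
    fun e => hgood e.val (hM₀sub e.2)
  choose xe hxe hxred using hgood'
  have hxeM : ∀ e : {e // e ∈ M₀}, xe e ∈ msupp M :=
    fun e => mem_msupp.2 ⟨e.val, hM₀sub e.2, hxe e⟩
  -- each good endpoint has many blue neighbours in U
  set tf : {e // e ∈ M₀} → Finset V := fun e => U.filter (fun u => Blue.Adj (xe e) u)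
    with htfdef
  have htf : ∀ e : {e // e ∈ M₀}, (U.card : ℝ) - eps * t ≤ ((tf e).card : ℝ) := by
    intro e
    have hxU : xe e ∉ U := fun hc => (hUmem.1 hc) (hxeM e)
    have hsub : U.filter (fun u => ¬ Blue.Adj (xe e) u) ⊆
        (U.filter (fun u => ¬ G.Adj (xe e) u)) ∪
        (U.filter (fun u => G.Adj (xe e) u ∧ c s(xe e, u) = true)) := by
      intro u hu
      rw [Finset.mem_filter] at hu
      rw [Finset.mem_union, Finset.mem_filter, Finset.mem_filter]
      by_cases hadj : G.Adj (xe e) u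
      · refine Or.inr ⟨hu.1, hadj, ?_⟩
        cases hcbv : c s(xe e, u)
        · exact absurd ⟨hadj, hcbv⟩ hu.2
        · rfl
      · exact Or.inl ⟨hu.1, hadj⟩
    have h1 : ((U.filter (fun u => ¬ Blue.Adj (xe e) u)).card : ℝ) ≤ eps * t := by
      have hc := le_trans (Finset.card_le_card hsub) (Finset.card_union_le _ _)
      have hc3 := hnon (xe e) U hxU
      have hc4 := hxred e
      have : ((U.filter (fun u => ¬ Blue.Adj (xe e) u)).card : ℝ) ≤
          ((U.filter (fun u => ¬ G.Adj (xe e) u)).card : ℝ) +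
          ((U.filter (fun u => G.Adj (xe e) u ∧ c s(xe e, u) = true)).card : ℝ) := by
        exact_mod_cast hc
      have : ((U.filter (fun u => G.Adj (xe e) u ∧ c s(xe e, u) = true)).card : ℝ) ≤ 1 := by
        exact_mod_cast hc4
      linarith
    have h2 := Finset.card_filter_add_card_filter_not (s := U) (p := Blue.Adj (xe e))
    have h2' : ((U.filter (Blue.Adj (xe e))).card : ℝ) +
        ((U.filter (fun u => ¬ Blue.Adj (xe e) u)).card : ℝ) = U.card := by exact_mod_cast h2
    rw [htfdef]
    linarith
  -- Hall's theorem to pick distinct blue U-partners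
  have hHall : ∀ s : Finset {e // e ∈ M₀}, s.card ≤ (s.biUnion tf).card := by
    intro s
    rcases Finset.eq_empty_or_nonempty s with rfl | ⟨e, he⟩
    · simp
    have hs1 : s.card ≤ k := by
      have := Finset.card_le_univ s
      rwa [Fintype.card_coe, hM₀card] at this
    have hs2 : (tf e).card ≤ (s.biUnion tf).card :=
      Finset.card_le_card (Finset.subset_biUnion_of_mem tf he)
    have hs3 : (k : ℝ) ≤ ((tf e).card : ℝ) := by
      have hcast : (k : ℝ) + (h : ℝ) ≤ (U.card : ℝ) := by exact_mod_cast hkh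
      have := htf e
      linarith
    have hs3' : k ≤ (tf e).card := by exact_mod_cast hs3
    omega
  obtain ⟨f, hfinj, hftf⟩ := (Finset.all_card_le_biUnion_card_iff_exists_injective tf).1 hHall
  have hfU : ∀ e : {e // e ∈ M₀}, f e ∈ U := by
    intro e
    have := hftf e
    rw [htfdef] at this
    exact (Finset.mem_filter.1 this).1
  have hfblue : ∀ e : {e // e ∈ M₀}, Blue.Adj (xe e) (f e) := by
    intro e
    have := hftf e
    rw [htfdef] at this
    exact (Finset.mem_filter.1 this).2
  
  -- the chosen partner vertices
  set F := Finset.univ.image f with hFdef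
  have hFcard : F.card = k := by
    rw [hFdef, Finset.card_image_of_injective _ hfinj, Finset.card_univ,
      Fintype.card_coe, hM₀card]
  have hFU : F ⊆ U := by
    intro z hz
    rw [hFdef, Finset.mem_image] at hz
    obtain ⟨e, -, rfl⟩ := hz
    exact hfU e
  set U' := U \ F with hU'def
  have hU'U : U' ⊆ U := Finset.sdiff_subset
  have hU'card : U'.card = U.card - k := by
    rw [hU'def, Finset.card_sdiff_of_subset hFU, hFcard]
  have hkU : k ≤ U.card := by omega
  have rU' : (U'.card : ℝ) = (U.card : ℝ) - k := by
    rw [hU'card, Nat.cast_sub hkU]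
  have hU'h : (2 : ℝ) * eps * t - 1 ≤ (U'.card : ℝ) := by
    have : (h : ℝ) ≤ ((U.card - k : ℕ) : ℝ) := by
      have : h ≤ U.card - k := by omega
      exact_mod_cast this
    rw [Nat.cast_sub hkU] at this
    linarith
  -- near-perfect blue matching inside U'
  obtain ⟨M₁, hM₁, hM₁W, hM₁cov⟩ := near_perfect_matching (G := Blue) U'
    ((U'.card : ℝ) - eps * t)
    (fun v hv => hblue_deg U' hU'U v (hU'U hv))
    (by linarith)
  -- the connecting blue edges
  set E₂ := Finset.univ.image (fun e : {e // e ∈ M₀} => s(xe e, f e)) with hE₂def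
  have hxe_ne_U : ∀ e : {e // e ∈ M₀}, xe e ∉ U := fun e hc => (hUmem.1 hc) (hxeM e)
  have hE₂inj : Function.Injective (fun e : {e // e ∈ M₀} => s(xe e, f e)) := by
    intro a b hab
    simp only [Sym2.eq_iff] at hab
    rcases hab with ⟨h1, h2⟩ | ⟨h1, h2⟩
    · exact hfinj h2
    · exact absurd (h1 ▸ hxeM a) (fun hc => (hUmem.1 (hfU b)) (by
        exact (h1 ▸ hxeM a)))
  have hE₂card : E₂.card = k := by
    rw [hE₂def, Finset.card_image_of_injective _ hE₂inj, Finset.card_univ,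
      Fintype.card_coe, hM₀card]
  have hM₁U' : ∀ g ∈ M₁, ∀ z, z ∈ g → z ∈ U' := hM₁W
  have hvalne : ∀ a b : {e // e ∈ M₀}, a ≠ b → (a : Sym2 V) ≠ (b : Sym2 V) :=
    fun a b hab hc => hab (Subtype.ext hc)
  -- disjointness of an M₁ edge from an E₂ edge
  have hmix : ∀ g ∈ M₁, ∀ (e : {e // e ∈ M₀}), ∀ z, z ∈ g → z ∉ s(xe e, f e) := by
    intro g hg e z hzg hze
    have hzU' : z ∈ U' := hM₁U' g hg z hzg
    rcases Sym2.mem_iff.1 hze with rfl | rfl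
    · exact hxe_ne_U e (hU'U hzU')
    · rw [hU'def, Finset.mem_sdiff] at hzU'
      exact hzU'.2 (by rw [hFdef]; exact Finset.mem_image.2 ⟨e, Finset.mem_univ _, rfl⟩)
  -- disjointness of two E₂ edges
  have hE₂dis : ∀ a b : {e // e ∈ M₀}, a ≠ b → ∀ z, z ∈ s(xe a, f a) → z ∉ s(xe b, f b) := by
    intro a b hab z hza hzb
    have haM : (a : Sym2 V) ∈ M := hM₀sub a.2
    have hbM : (b : Sym2 V) ∈ M := hM₀sub b.2
    rcases Sym2.mem_iff.1 hza with rfl | rfl <;> rcases Sym2.mem_iff.1 hzb with h2 | h2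
    · exact hM.2 haM hbM (hvalne a b hab) (xe a) (hxe a) (h2 ▸ hxe b)
    · exact (hUmem.1 (h2 ▸ hfU b)) (hxeM a)
    · exact (hUmem.1 (hfU a)) (h2 ▸ hxeM b)
    · exact hab (hfinj h2)
  set MB := M₁ ∪ E₂ with hMBdef
  have hM₁E₂ : Disjoint M₁ E₂ := by
    rw [Finset.disjoint_left]
    intro g hg hgE
    rw [hE₂def, Finset.mem_image] at hgE
    obtain ⟨e, -, rfl⟩ := hgE
    exact hmix _ hg e (xe e) (Sym2.mem_mk_left _ _) (Sym2.mem_mk_left _ _)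
  have hMBcard : MB.card = M₁.card + k := by
    rw [hMBdef, Finset.card_union_of_disjoint hM₁E₂, hE₂card]
  -- MB is a blue matching
  have hMBmatch : IsMatching' Blue MB := by
    constructor
    · intro g hg
      rcases Finset.mem_union.1 hg with hg | hg
      · exact hM₁.1 g hg
      · rw [hE₂def, Finset.mem_image] at hg
        obtain ⟨e, -, rfl⟩ := hg
        exact Blue.mem_edgeSet.2 (hfblue e)
    · intro g1 hg1 g2 hg2 hne z hz1 hz2
      rw [Finset.mem_coe, hMBdef, Finset.mem_union] at hg1 hg2
      rcases hg1 with hg1 | hg1 <;> rcases hg2 with hg2 | hg2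
      · exact hM₁.2 hg1 hg2 hne z hz1 hz2
      · rw [hE₂def, Finset.mem_image] at hg2
        obtain ⟨e, -, rfl⟩ := hg2
        exact hmix _ hg1 e z hz1 hz2
      · rw [hE₂def, Finset.mem_image] at hg1
        obtain ⟨e, -, rfl⟩ := hg1
        exact hmix _ hg2 e z hz2 hz1
      · rw [hE₂def, Finset.mem_image] at hg1 hg2
        obtain ⟨a, -, rfl⟩ := hg1
        obtain ⟨b, -, rfl⟩ := hg2
        have hab : a ≠ b := fun hc => hne (by rw [hc])
        exact hE₂dis a b hab z hz1 hz2
  -- connectivity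
  have hanchor : ∀ g ∈ MB, ∀ z, z ∈ g → ∃ z', z' ∈ U ∧ Blue.Reachable z z' := by
    intro g hg z hz
    rcases Finset.mem_union.1 hg with hg | hg
    · exact ⟨z, hU'U (hM₁U' g hg z hz), SimpleGraph.Reachable.refl z⟩
    · rw [hE₂def, Finset.mem_image] at hg
      obtain ⟨e, -, rfl⟩ := hg
      rcases Sym2.mem_iff.1 hz with rfl | rfl
      · exact ⟨f e, hfU e, (hfblue e).reachable⟩
      · exact ⟨f e, hfU e, SimpleGraph.Reachable.refl _⟩
  have hconn : IsConnMatching Blue MB := by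
    refine ⟨hMBmatch, ?_⟩
    intro g1 hg1 g2 hg2 u v hu hv
    obtain ⟨u', hu'U, hru⟩ := hanchor g1 hg1 u hu
    obtain ⟨v', hv'U, hrv⟩ := hanchor g2 hg2 v hv
    exact (hru.trans (hreach u' hu'U v' hv'U)).trans hrv.symm
  refine ⟨MB, hconn, ?_⟩
  -- final counting
  have rU : (U.card : ℝ) + 2 * (M.card : ℝ) = n := by exact_mod_cast hUcard
  have rcov : (U'.card : ℝ) ≤ 2 * (M₁.card : ℝ) + 1 := hM₁cov
  have rMB : ((2 * MB.card : ℕ) : ℝ) = 2 * (M₁.card : ℝ) + 2 * (k : ℝ) := by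
    rw [hMBcard]
    push_cast
    ring
  rw [rMB]
  by_cases hcase : M.card ≤ K
  · have hkval : k = M.card := by omega
    have hkval' : (k : ℝ) = M.card := by exact_mod_cast hkval
    refine le_trans (min_le_left _ _) ?_
    have hM1t : (M.card : ℝ) + 1 ≤ (1 + 2 * eps) * t := by linarith
    linarith
  · have hkval : k = K := by omega
    have hkval' : (k : ℝ) = (U.card : ℝ) - h := by rw [hkval]; exact hKcast
    refine le_trans (min_le_right _ _) ?_
    linarith
end

section
/- For n ∈ ℕ sufficiently large the following holds. Let G be a tripartite graph on 3n vertices with the three partition classes each of size n, and assume every vertex has at least 3n/4 neighbours in each of the two partition classes it does not belong to. Then G contains a triangle-connected triangle factor covering every vertex of G, and moreover every pair of edges of G is triangle-connected. -/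
/-- Auxiliary: lower bound on the size of an intersection of two subsets of `A`. -/
lemma inter_card_lower {α : Type*} [DecidableEq α] (A s t : Finset α)
    (hs : s ⊆ A) (ht : t ⊆ A) :
    (s.card : ℝ) + t.card - A.card ≤ ((s ∩ t).card : ℝ) := by
  have h := Finset.card_union_add_card_inter s t
  have h2 : (s ∪ t).card ≤ A.card := Finset.card_le_card (Finset.union_subset hs ht)
  have h' : ((s ∪ t).card : ℝ) + ((s ∩ t).card : ℝ) = (s.card : ℝ) + t.card := by
    exact_mod_cast congrArg (Nat.cast : ℕ → ℝ) h
  have h2' : ((s ∪ t).card : ℝ) ≤ (A.card : ℝ) := by exact_mod_cast h2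
  linarith

/-- dense tripartite graphs have spanning TCTFs. -/
theorem tripartite_TCTF :
    ∃ n0 : ℕ, ∀ n : ℕ, n0 ≤ n →
      ∀ (V : Type) [Fintype V] [DecidableEq V] (G : SimpleGraph V) (X Y Z : Finset V),
        ([X, Y, Z] : List (Finset V)).Pairwise Disjoint →
        X ∪ Y ∪ Z = Finset.univ →
        X.card = n → Y.card = n → Z.card = n →
        (∀ u ∈ X, ∀ v ∈ X, ¬G.Adj u v) →
        (∀ u ∈ Y, ∀ v ∈ Y, ¬G.Adj u v) →
        (∀ u ∈ Z, ∀ v ∈ Z, ¬G.Adj u v) →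
        (∀ v ∈ X, (3 * n / 4 : ℝ) ≤ (nbrCountIn G v Y : ℝ) ∧
                  (3 * n / 4 : ℝ) ≤ (nbrCountIn G v Z : ℝ)) →
        (∀ v ∈ Y, (3 * n / 4 : ℝ) ≤ (nbrCountIn G v X : ℝ) ∧
                  (3 * n / 4 : ℝ) ≤ (nbrCountIn G v Z : ℝ)) →
        (∀ v ∈ Z, (3 * n / 4 : ℝ) ≤ (nbrCountIn G v X : ℝ) ∧
                  (3 * n / 4 : ℝ) ≤ (nbrCountIn G v Y : ℝ)) →
        (∃ T : Finset (Finset V), IsTCTF G T ∧ T.biUnion id = Finset.univ) ∧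
        (∀ e ∈ G.edgeSet, ∀ f ∈ G.edgeSet, TriangleConnected G e f) := by
  refine ⟨1, ?_⟩
  intro n hn V _ _ G X Y Z hPairwise hCover hXc hYc hZc hXind hYind hZind hXdeg hYdeg hZdeg
  classical
  have hn1 : (1 : ℝ) ≤ (n : ℝ) := by exact_mod_cast hn
  -- disjointness facts
  have hXY : Disjoint X Y := by
    have := hPairwise; simp [List.pairwise_cons] at this; exact this.1.1
  have hXZ : Disjoint X Z := by
    have := hPairwise; simp [List.pairwise_cons] at this; exact this.1.2
  have hYZ : Disjoint Y Z := by
    have := hPairwise; simp [List.pairwise_cons] at this; exact this.2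
  have notXY : ∀ a : V, a ∈ X → a ∈ Y → False := fun a h1 h2 =>
    (Finset.disjoint_left.1 hXY h1) h2
  have notXZ : ∀ a : V, a ∈ X → a ∈ Z → False := fun a h1 h2 =>
    (Finset.disjoint_left.1 hXZ h1) h2
  have notYZ : ∀ a : V, a ∈ Y → a ∈ Z → False := fun a h1 h2 =>
    (Finset.disjoint_left.1 hYZ h1) h2
  -- part inequalities
  have hXne : X.Nonempty := Finset.card_pos.1 (by omega)
  have hXneY : X ≠ Y := by
    rintro rfl; obtain ⟨a, ha⟩ := hXne; exact notXY a ha ha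
  have hXneZ : X ≠ Z := by
    rintro rfl; obtain ⟨a, ha⟩ := hXne; exact notXZ a ha ha
  have hYneZ : Y ≠ Z := by
    rintro rfl
    have hYne : Y.Nonempty := Finset.card_pos.1 (by omega)
    obtain ⟨a, ha⟩ := hYne; exact notYZ a ha ha
  -- every vertex is in some part
  have hmemcases : ∀ v : V, v ∈ X ∨ v ∈ Y ∨ v ∈ Z := by
    intro v
    have : v ∈ X ∪ Y ∪ Z := hCover ▸ Finset.mem_univ v
    simpa [Finset.mem_union, or_assoc] using this
  set isPart : Finset V → Prop := fun P => P = X ∨ P = Y ∨ P = Z with hisPart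
  have hPX : isPart X := Or.inl rfl
  have hPY : isPart Y := Or.inr (Or.inl rfl)
  have hPZ : isPart Z := Or.inr (Or.inr rfl)
  have hPcard : ∀ P, isPart P → P.card = n := by
    rintro P (rfl | rfl | rfl) <;> assumption
  have hdisjP : ∀ P Q, isPart P → isPart Q → P ≠ Q → ∀ a ∈ P, a ∉ Q := by
    rintro P Q (rfl | rfl | rfl) (rfl | rfl | rfl) hne a ha haQ <;>
      first
        | exact hne rfl
        | exact notXY a ha haQ
        | exact notXY a haQ ha
        | exact notXZ a ha haQ
        | exact notXZ a haQ ha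
        | exact notYZ a ha haQ
        | exact notYZ a haQ ha
  have hthird : ∀ P Q, isPart P → isPart Q → ∃ R, isPart R ∧ R ≠ P ∧ R ≠ Q := by
    rintro P Q (rfl | rfl | rfl) (rfl | rfl | rfl) <;>
      first
        | exact ⟨Z, hPZ, hXneZ.symm, hYneZ.symm⟩
        | exact ⟨Z, hPZ, hYneZ.symm, hXneZ.symm⟩
        | exact ⟨Z, hPZ, hXneZ.symm, hXneZ.symm⟩
        | exact ⟨Z, hPZ, hYneZ.symm, hYneZ.symm⟩
        | exact ⟨Y, hPY, hXneY.symm, hYneZ⟩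
        | exact ⟨Y, hPY, hYneZ, hXneY.symm⟩
        | exact ⟨Y, hPY, hYneZ, hYneZ⟩
        | exact ⟨X, hPX, hXneY, hXneZ⟩
        | exact ⟨X, hPX, hXneZ, hXneY⟩
  -- no edges within a part
  have hnotadj : ∀ P, isPart P → ∀ u v, u ∈ P → v ∈ P → ¬G.Adj u v := by
    rintro P (rfl | rfl | rfl) u v hu hv <;>
      first
        | exact hXind u hu v hv
        | exact hYind u hu v hv
        | exact hZind u hu v hv
  -- degree condition, in Finset.filter form
  have hcount : ∀ (v : V) (A : Finset V),
      (nbrCountIn G v A : ℝ) = ((A.filter (fun a => G.Adj v a)).card : ℝ) := by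
    intro v A
    have : {a ∈ (A : Set V) | G.Adj v a} = ↑(A.filter (fun a => G.Adj v a)) := by
      ext a; simp
    rw [nbrCountIn, this, Set.ncard_coe_finset]
  have hdeg : ∀ P, isPart P → ∀ v : V, v ∉ P →
      (3 * n / 4 : ℝ) ≤ ((P.filter (fun a => G.Adj v a)).card : ℝ) := by
    rintro P hP v hv
    rcases hmemcases v with hvX | hvY | hvZ <;> rcases hP with rfl | rfl | rfl <;>
      first
        | exact absurd (by assumption) hv
        | · rw [← hcount]; exact (hXdeg v hvX).1
        | · rw [← hcount]; exact (hXdeg v hvX).2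
        | · rw [← hcount]; exact (hYdeg v hvY).1
        | · rw [← hcount]; exact (hYdeg v hvY).2
        | · rw [← hcount]; exact (hZdeg v hvZ).1
        | · rw [← hcount]; exact (hZdeg v hvZ).2
  -- common neighbours of three vertices in a part containing none of them
  have hcommon : ∀ P, isPart P → ∀ u v w : V, u ∉ P → v ∉ P → w ∉ P →
      ∃ a ∈ P, G.Adj u a ∧ G.Adj v a ∧ G.Adj w a := by
    intro P hP u v w hu hv hw
    have hPn : (P.card : ℝ) = (n : ℝ) := by exact_mod_cast hPcard P hP
    set F1 := P.filter (fun a => G.Adj u a) with hF1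
    set F2 := P.filter (fun a => G.Adj v a) with hF2
    set F3 := P.filter (fun a => G.Adj w a) with hF3
    have h1 := hdeg P hP u hu
    have h2 := hdeg P hP v hv
    have h3 := hdeg P hP w hw
    have h12 := inter_card_lower P F1 F2 (Finset.filter_subset _ _) (Finset.filter_subset _ _)
    have h123 := inter_card_lower P (F1 ∩ F2) F3
      ((Finset.inter_subset_left).trans (Finset.filter_subset _ _)) (Finset.filter_subset _ _)
    have hpos : (0 : ℝ) < ((F1 ∩ F2 ∩ F3).card : ℝ) := by
      rw [hPn] at h12 h123; linarith
    have : (F1 ∩ F2 ∩ F3).Nonempty := Finset.card_pos.1 (by exact_mod_cast hpos)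
    obtain ⟨a, ha⟩ := this
    simp only [hF1, hF2, hF3, Finset.mem_inter, Finset.mem_filter] at ha
    exact ⟨a, ha.1.1.1, ha.1.1.2, ha.1.2.2, ha.2.2⟩
  -- adjacency is between different parts
  have hadj_notin : ∀ P, isPart P → ∀ u v, u ∈ P → G.Adj u v → v ∉ P := by
    intro P hP u v hu hadj hv
    exact hnotadj P hP u v hu hv hadj
  -- L1 : two edges at a common vertex with far endpoints in the same part
  have hL1 : ∀ P Q, isPart P → isPart Q → P ≠ Q → ∀ u z w : V, u ∈ P → z ∈ Q → w ∈ Q →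
      G.Adj u z → G.Adj u w → TriangleConnected G s(u, z) s(u, w) := by
    intro P Q hP hQ hne u z w hu hz hw huz huw
    obtain ⟨R, hR, hRP, hRQ⟩ := hthird P Q hP hQ
    have huR : u ∉ R := hdisjP P R hP hR (Ne.symm hRP) u hu
    have hzR : z ∉ R := hdisjP Q R hQ hR (Ne.symm hRQ) z hz
    have hwR : w ∉ R := hdisjP Q R hQ hR (Ne.symm hRQ) w hw
    obtain ⟨t, _, hut, hzt, hwt⟩ := hcommon R hR u z w huR hzR hwR
    have step1 : EdgeTriangleAdj G s(u, z) s(u, t) := ⟨u, z, t, huz, hut, hzt, rfl, rfl⟩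
    have step2 : EdgeTriangleAdj G s(u, t) s(u, w) := ⟨u, t, w, hut, huw, hwt.symm, rfl, rfl⟩
    exact Relation.ReflTransGen.head step1 (Relation.ReflTransGen.single step2)
  -- L2 : any two edges sharing a vertex are triangle connected
  have hL2 : ∀ u v w : V, G.Adj u v → G.Adj u w → TriangleConnected G s(u, v) s(u, w) := by
    intro u v w huv huw
    obtain ⟨Pu, hPu, hu⟩ : ∃ P, isPart P ∧ u ∈ P := by
      rcases hmemcases u with h | h | h
      exacts [⟨X, hPX, h⟩, ⟨Y, hPY, h⟩, ⟨Z, hPZ, h⟩]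
    obtain ⟨Pv, hPv, hv⟩ : ∃ P, isPart P ∧ v ∈ P := by
      rcases hmemcases v with h | h | h
      exacts [⟨X, hPX, h⟩, ⟨Y, hPY, h⟩, ⟨Z, hPZ, h⟩]
    obtain ⟨Pw, hPw, hw⟩ : ∃ P, isPart P ∧ w ∈ P := by
      rcases hmemcases w with h | h | h
      exacts [⟨X, hPX, h⟩, ⟨Y, hPY, h⟩, ⟨Z, hPZ, h⟩]
    have hvPu : v ∉ Pu := hadj_notin Pu hPu u v hu huv
    have hwPu : w ∉ Pu := hadj_notin Pu hPu u w hu huw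
    have hPuPv : Pu ≠ Pv := by rintro rfl; exact hvPu hv
    have hPuPw : Pu ≠ Pw := by rintro rfl; exact hwPu hw
    by_cases hPvw : Pv = Pw
    · subst hPvw
      exact hL1 Pu Pv hPu hPv hPuPv u v w hu hv hw huv huw
    · have huPw : u ∉ Pw := hdisjP Pu Pw hPu hPw hPuPw u hu
      have hvPw : v ∉ Pw := hdisjP Pv Pw hPv hPw hPvw v hv
      obtain ⟨z, hzPw, huz, hvz, -⟩ := hcommon Pw hPw u v v huPw hvPw hvPw
      have step1 : EdgeTriangleAdj G s(u, v) s(u, z) := ⟨u, v, z, huv, huz, hvz, rfl, rfl⟩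
      exact Relation.ReflTransGen.head step1
        (hL1 Pu Pw hPu hPw hPuPw u z w hu hzPw hw huz huw)
  -- L3 : any two edges are triangle connected
  have hTCall : ∀ u v w x : V, G.Adj u v → G.Adj w x →
      TriangleConnected G s(u, v) s(w, x) := by
    intro u v w x huv hwx
    obtain ⟨Pu, hPu, hu⟩ : ∃ P, isPart P ∧ u ∈ P := by
      rcases hmemcases u with h | h | h
      exacts [⟨X, hPX, h⟩, ⟨Y, hPY, h⟩, ⟨Z, hPZ, h⟩]
    obtain ⟨Pw, hPw, hw⟩ : ∃ P, isPart P ∧ w ∈ P := by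
      rcases hmemcases w with h | h | h
      exacts [⟨X, hPX, h⟩, ⟨Y, hPY, h⟩, ⟨Z, hPZ, h⟩]
    obtain ⟨R, hR, hRPu, hRPw⟩ := hthird Pu Pw hPu hPw
    have huR : u ∉ R := hdisjP Pu R hPu hR (Ne.symm hRPu) u hu
    have hwR : w ∉ R := hdisjP Pw R hPw hR (Ne.symm hRPw) w hw
    obtain ⟨z, -, huz, hwz, -⟩ := hcommon R hR u w w huR hwR hwR
    have h1 : TriangleConnected G s(u, v) s(u, z) := hL2 u v z huv huz
    have h2 : TriangleConnected G s(z, u) s(z, w) := hL2 z u w huz.symm hwz.symm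
    have h3 : TriangleConnected G s(w, z) s(w, x) := hL2 w z x hwz hwx
    rw [Sym2.eq_swap (a := z) (b := u), Sym2.eq_swap (a := z) (b := w)] at h2
    exact (h1.trans h2).trans h3
  have hTCedges : ∀ e ∈ G.edgeSet, ∀ f ∈ G.edgeSet, TriangleConnected G e f := by
    intro e he f hf
    induction e using Sym2.ind with
    | _ u v =>
      induction f using Sym2.ind with
      | _ w x =>
        rw [SimpleGraph.mem_edgeSet] at he hf
        exact hTCall u v w x he hf
  -- Hall's theorem, first application: perfect matching between X and Y
  have hcardι : Fintype.card {x // x ∈ X} = n := by rw [Fintype.card_coe, hXc]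
  have hbig : ∀ (P : Finset V), isPart P → ∀ (S' : Finset V), S' ⊆ X →
      (3 * n / 4 : ℝ) < (S'.card : ℝ) → P ≠ X → ∀ y ∈ P, ∃ x ∈ S', G.Adj y x := by
    intro P hP S' hS'X hS'big hPX' y hy
    have hyX : y ∉ X := hdisjP P X hP hPX hPX' y hy
    have hyd := hdeg X hPX y hyX
    have hlow := inter_card_lower X S' (X.filter (fun a => G.Adj y a)) hS'X
      (Finset.filter_subset _ _)
    have hXn : (X.card : ℝ) = (n : ℝ) := by exact_mod_cast hXc
    have hpos : (0 : ℝ) < (((S' ∩ X.filter (fun a => G.Adj y a)).card : ℝ)) := by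
      rw [hXn] at hlow; linarith
    have : (S' ∩ X.filter (fun a => G.Adj y a)).Nonempty :=
      Finset.card_pos.1 (by exact_mod_cast hpos)
    obtain ⟨x, hx⟩ := this
    simp only [Finset.mem_inter, Finset.mem_filter] at hx
    exact ⟨x, hx.1, hx.2.2⟩
  obtain ⟨f0, hf0inj, hf0mem⟩ :=
    (Finset.all_card_le_biUnion_card_iff_exists_injective
      (fun x : {x // x ∈ X} => Y.filter (fun y => G.Adj x.1 y))).1 (by
    intro S
    rcases S.eq_empty_or_nonempty with rfl | ⟨x0, hx0⟩
    · simp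
    set U := S.biUnion (fun x : {x // x ∈ X} => Y.filter (fun y => G.Adj x.1 y)) with hU
    have hUY : U ⊆ Y := Finset.biUnion_subset.2 fun x _ => Finset.filter_subset _ _
    have hx0U : Y.filter (fun y => G.Adj x0.1 y) ⊆ U :=
      Finset.subset_biUnion_of_mem (fun x : {x // x ∈ X} => Y.filter (fun y => G.Adj x.1 y)) hx0
    have hx0Y : x0.1 ∉ Y := fun h => notXY x0.1 x0.2 h
    have hd0 := hdeg Y hPY x0.1 hx0Y
    by_cases hS : (S.card : ℝ) ≤ 3 * n / 4
    · have hc : ((Y.filter (fun y => G.Adj x0.1 y)).card : ℝ) ≤ (U.card : ℝ) := by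
        exact_mod_cast Finset.card_le_card hx0U
      have : (S.card : ℝ) ≤ (U.card : ℝ) := by linarith
      exact_mod_cast this
    · push_neg at hS
      set S' := S.image Subtype.val with hS'
      have hS'card : S'.card = S.card := Finset.card_image_of_injective _ Subtype.val_injective
      have hS'X : S' ⊆ X := by
        intro a ha; simp only [hS', Finset.mem_image] at ha
        obtain ⟨x, -, rfl⟩ := ha; exact x.2
      have hYU : Y ⊆ U := by
        intro y hy
        obtain ⟨x, hxS', hyx⟩ := hbig Y hPY S' hS'X (by rw [hS'card]; exact hS) hXneY.symm y hy
        simp only [hS', Finset.mem_image] at hxS'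
        obtain ⟨xs, hxsS, rfl⟩ := hxS'
        exact Finset.mem_biUnion.2 ⟨xs, hxsS, Finset.mem_filter.2 ⟨hy, hyx.symm⟩⟩
      calc S.card ≤ Fintype.card {x // x ∈ X} := S.card_le_univ
        _ = n := hcardι
        _ = Y.card := hYc.symm
        _ ≤ U.card := Finset.card_le_card hYU)
  have hf0Y : ∀ x : {x // x ∈ X}, f0 x ∈ Y ∧ G.Adj x.1 (f0 x) := by
    intro x
    have := hf0mem x
    simpa [Finset.mem_filter] using this
  have hf0surj : ∀ y ∈ Y, ∃ x : {x // x ∈ X}, f0 x = y := by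
    have himg : (Finset.univ.image f0) = Y := by
      apply Finset.eq_of_subset_of_card_le
      · intro y hy
        obtain ⟨x, -, rfl⟩ := Finset.mem_image.1 hy
        exact (hf0Y x).1
      · rw [Finset.card_image_of_injective _ hf0inj, Finset.card_univ, hcardι, hYc]
    intro y hy
    rw [← himg] at hy
    obtain ⟨x, -, hx⟩ := Finset.mem_image.1 hy
    exact ⟨x, hx⟩
  -- Hall's theorem, second application: match each edge x-(f0 x) to a common nbr in Z
  set t2 : {x // x ∈ X} → Finset V :=
    fun x => Z.filter (fun z => G.Adj x.1 z ∧ G.Adj (f0 x) z) with ht2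
  have ht2low : ∀ x : {x // x ∈ X}, ((n : ℝ) / 2) ≤ ((t2 x).card : ℝ) := by
    intro x
    have hxZ : x.1 ∉ Z := fun h => notXZ x.1 x.2 h
    have hfZ : f0 x ∉ Z := fun h => notYZ (f0 x) (hf0Y x).1 h
    have h1 := hdeg Z hPZ x.1 hxZ
    have h2 := hdeg Z hPZ (f0 x) hfZ
    have hlow := inter_card_lower Z (Z.filter (fun a => G.Adj x.1 a))
      (Z.filter (fun a => G.Adj (f0 x) a)) (Finset.filter_subset _ _) (Finset.filter_subset _ _)
    have hsub : Z.filter (fun a => G.Adj x.1 a) ∩ Z.filter (fun a => G.Adj (f0 x) a) ⊆ t2 x := by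
      intro a ha
      simp only [Finset.mem_inter, Finset.mem_filter] at ha
      exact Finset.mem_filter.2 ⟨ha.1.1, ha.1.2, ha.2.2⟩
    have hc : ((Z.filter (fun a => G.Adj x.1 a) ∩ Z.filter (fun a => G.Adj (f0 x) a)).card : ℝ)
        ≤ ((t2 x).card : ℝ) := by exact_mod_cast Finset.card_le_card hsub
    have hZn : (Z.card : ℝ) = (n : ℝ) := by exact_mod_cast hZc
    rw [hZn] at hlow; linarith
  obtain ⟨g0, hg0inj, hg0mem⟩ :=
    (Finset.all_card_le_biUnion_card_iff_exists_injective t2).1 (by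
    intro S
    rcases S.eq_empty_or_nonempty with rfl | ⟨x0, hx0⟩
    · simp
    set U := S.biUnion t2 with hU
    have hx0U : t2 x0 ⊆ U := Finset.subset_biUnion_of_mem _ hx0
    by_cases hS : (S.card : ℝ) ≤ (n : ℝ) / 2
    · have hc : ((t2 x0).card : ℝ) ≤ (U.card : ℝ) := by exact_mod_cast Finset.card_le_card hx0U
      have := ht2low x0
      have : (S.card : ℝ) ≤ (U.card : ℝ) := by linarith
      exact_mod_cast this
    · push_neg at hS
      have hZU : Z ⊆ U := by
        intro z hz
        have hzX : z ∉ X := fun h => notXZ z h hz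
        have hzY : z ∉ Y := fun h => notYZ z h hz
        -- A1 : elements of X adjacent to z;  A2 : elements x with f0 x adjacent to z
        set A1 : Finset {x // x ∈ X} := Finset.univ.filter (fun x => G.Adj z x.1) with hA1
        set A2 : Finset {x // x ∈ X} := Finset.univ.filter (fun x => G.Adj z (f0 x)) with hA2
        have hA1card : (3 * n / 4 : ℝ) ≤ (A1.card : ℝ) := by
          have himg : A1.image Subtype.val = X.filter (fun a => G.Adj z a) := by
            ext a
            simp only [hA1, Finset.mem_image, Finset.mem_filter, Finset.mem_univ, true_and]
            constructor
            · rintro ⟨x, hx, rfl⟩; exact ⟨x.2, hx⟩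
            · rintro ⟨haX, ha⟩; exact ⟨⟨a, haX⟩, ha, rfl⟩
          have := hdeg X hPX z hzX
          rw [← himg, Finset.card_image_of_injective _ Subtype.val_injective] at this
          exact this
        have hA2card : (3 * n / 4 : ℝ) ≤ (A2.card : ℝ) := by
          have himg : A2.image f0 = Y.filter (fun a => G.Adj z a) := by
            ext a
            simp only [hA2, Finset.mem_image, Finset.mem_filter, Finset.mem_univ, true_and]
            constructor
            · rintro ⟨x, hx, rfl⟩; exact ⟨(hf0Y x).1, hx⟩
            · rintro ⟨haY, ha⟩
              obtain ⟨x, rfl⟩ := hf0surj a haY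
              exact ⟨x, ha, rfl⟩
          have := hdeg Y hPY z hzY
          rw [← himg, Finset.card_image_of_injective _ hf0inj] at this
          exact this
        have hu1 : A1 ⊆ Finset.univ := Finset.subset_univ _
        have hu2 : A2 ⊆ Finset.univ := Finset.subset_univ _
        have h12 := inter_card_lower Finset.univ A1 A2 hu1 hu2
        have h12S := inter_card_lower Finset.univ (A1 ∩ A2) S
          (Finset.subset_univ _) (Finset.subset_univ _)
        have hucard : ((Finset.univ : Finset {x // x ∈ X}).card : ℝ) = (n : ℝ) := by
          rw [Finset.card_univ, hcardι]
        rw [hucard] at h12 h12S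
        have hpos : (0 : ℝ) < (((A1 ∩ A2 ∩ S).card : ℝ)) := by linarith
        have : (A1 ∩ A2 ∩ S).Nonempty := Finset.card_pos.1 (by exact_mod_cast hpos)
        obtain ⟨x, hx⟩ := this
        simp only [hA1, hA2, Finset.mem_inter, Finset.mem_filter, Finset.mem_univ,
          true_and] at hx
        exact Finset.mem_biUnion.2 ⟨x, hx.2,
          Finset.mem_filter.2 ⟨hz, hx.1.1.symm, hx.1.2.symm⟩⟩
      calc S.card ≤ Fintype.card {x // x ∈ X} := S.card_le_univ
        _ = n := hcardι
        _ = Z.card := hZc.symm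
        _ ≤ U.card := Finset.card_le_card hZU)
  have hg0Z : ∀ x : {x // x ∈ X}, g0 x ∈ Z ∧ G.Adj x.1 (g0 x) ∧ G.Adj (f0 x) (g0 x) := by
    intro x
    have := hg0mem x
    simpa [ht2, Finset.mem_filter] using this
  have hg0surj : ∀ z ∈ Z, ∃ x : {x // x ∈ X}, g0 x = z := by
    have himg : (Finset.univ.image g0) = Z := by
      apply Finset.eq_of_subset_of_card_le
      · intro z hz
        obtain ⟨x, -, rfl⟩ := Finset.mem_image.1 hz
        exact (hg0Z x).1
      · rw [Finset.card_image_of_injective _ hg0inj, Finset.card_univ, hcardι, hZc]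
    intro z hz
    rw [← himg] at hz
    obtain ⟨x, -, hx⟩ := Finset.mem_image.1 hz
    exact ⟨x, hx⟩
  -- the triangle factor
  set T : Finset (Finset V) :=
    Finset.univ.image (fun x : {x // x ∈ X} => ({x.1, f0 x, g0 x} : Finset V)) with hT
  have hTtri : ∀ t ∈ T, IsTriangle G t := by
    intro t ht
    obtain ⟨x, -, rfl⟩ := Finset.mem_image.1 ht
    exact ⟨x.1, f0 x, g0 x, (hf0Y x).2, (hg0Z x).2.1, (hg0Z x).2.2, rfl⟩
  have htri_inj : ∀ x x' : {x // x ∈ X},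
      ({x.1, f0 x, g0 x} : Finset V) = {x'.1, f0 x', g0 x'} → x = x' := by
    intro x x' h
    by_contra hne
    have hx : x.1 ∈ ({x'.1, f0 x', g0 x'} : Finset V) := by
      rw [← h]; simp
    simp only [Finset.mem_insert, Finset.mem_singleton] at hx
    rcases hx with h1 | h1 | h1
    · exact hne (Subtype.ext h1)
    · exact notXY x.1 x.2 (h1 ▸ (hf0Y x').1)
    · exact notXZ x.1 x.2 (h1 ▸ (hg0Z x').1)
  have hTdisj : (T : Set (Finset V)).Pairwise Disjoint := by
    intro t ht t' ht' hne
    simp only [hT, Finset.coe_image, Set.mem_image, Finset.mem_coe] at ht ht'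
    obtain ⟨x, -, rfl⟩ := ht
    obtain ⟨x', -, rfl⟩ := ht'
    have hxx' : x ≠ x' := fun h => hne (by rw [h])
    have hvx : x.1 ≠ x'.1 := fun h => hxx' (Subtype.ext h)
    rw [Finset.disjoint_left]
    intro a ha ha'
    simp only [Finset.mem_insert, Finset.mem_singleton] at ha ha'
    rcases ha with rfl | rfl | rfl <;> rcases ha' with h | h | h
    · exact hvx h
    · exact notXY x.1 x.2 (by rw [h]; exact (hf0Y x').1)
    · exact notXZ x.1 x.2 (by rw [h]; exact (hg0Z x').1)
    · exact notXY (f0 x) (by rw [h]; exact x'.2) (hf0Y x).1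
    · exact hxx' (hf0inj h)
    · exact notYZ (f0 x) (hf0Y x).1 (by rw [h]; exact (hg0Z x').1)
    · exact notXZ (g0 x) (by rw [h]; exact x'.2) (hg0Z x).1
    · exact notYZ (g0 x) (by rw [h]; exact (hf0Y x').1) (hg0Z x).1
    · exact hxx' (hg0inj h)
  have hTunion : T.biUnion id = Finset.univ := by
    apply Finset.eq_univ_of_forall
    intro v
    rw [Finset.mem_biUnion]
    rcases hmemcases v with hv | hv | hv
    · exact ⟨{(⟨v, hv⟩ : {x // x ∈ X}).1, f0 ⟨v, hv⟩, g0 ⟨v, hv⟩},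
        Finset.mem_image.2 ⟨⟨v, hv⟩, Finset.mem_univ _, rfl⟩, by simp⟩
    · obtain ⟨x, rfl⟩ := hf0surj v hv
      exact ⟨{x.1, f0 x, g0 x}, Finset.mem_image.2 ⟨x, Finset.mem_univ _, rfl⟩, by simp⟩
    · obtain ⟨x, rfl⟩ := hg0surj v hv
      exact ⟨{x.1, f0 x, g0 x}, Finset.mem_image.2 ⟨x, Finset.mem_univ _, rfl⟩, by simp⟩
  refine ⟨⟨T, ⟨hTtri, hTdisj, ?_⟩, hTunion⟩, hTCedges⟩
  intro t _ t' _ e he f hf _ _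
  exact hTCedges e he f hf
end
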